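/- arXiv:2008.00133 — 2 statements merged into one kernel-verified Lean document; each statement's English description precedes it below -/
import Mathlib

section
/- For integers n ≥ 0, m ≥ 1, nonnegative integers a_1,…,a_{m-1}, and a_m ≥ 1, one has P_n(a_1,…,a_{m-1},a_m) = Σ_{y=1}^{a_m} P_n(a_1,…,a_{m-1}, a_m − 1, y). -/
/-- A Dyck path: a finite sequence of ±1 steps with all partial sums nonnegative
and total sum zero. -/
def IsDyckPath (p : List ℤ) : Prop :=
  (∀ s ∈ p, s = 1 ∨ s = -1) ∧ (∀ k, 0 ≤ (p.take k).sum) ∧ p.sum = 0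

/-- The height of a path: the maximum of its partial sums (0 for the empty path). -/
def pathHeight (p : List ℤ) : ℕ :=
  Finset.sup (Finset.range (p.length + 1)) (fun k => ((p.take k).sum).toNat)

/-- Super-Catalan numbers `T(m,n) = (2m)!(2n)!/(2·m!·n!·(m+n)!)`, as a rational number. -/
def superCatalan (m n : ℕ) : ℚ :=
  ((2 * m).factorial * (2 * n).factorial : ℚ) /
    (2 * m.factorial * n.factorial * (m + n).factorial)

/-- `G n m k`: the number of `m`-tuples of Dyck paths of total length `2n` all of whose
pairwise height differences are at most `k` (this is `0` when `n < 0`). -/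
noncomputable def G (n : ℤ) (m k : ℕ) : ℕ :=
  Nat.card {p : Fin m → List ℤ //
    (∀ i, IsDyckPath (p i)) ∧
    (∑ i, ((p i).length : ℤ)) = 2 * n ∧
    ∀ i j, |(pathHeight (p i) : ℤ) - (pathHeight (p j) : ℤ)| ≤ (k : ℤ)}

/-- The path-height function `P n [a₁,…,aₘ]`: the number of `m`-tuples of Dyck paths
of total length `2n` whose `i`-th path has height `aᵢ`. -/
noncomputable def P (n : ℤ) (a : List ℕ) : ℕ :=
  Nat.card {p : Fin a.length → List ℤ //
    (∀ i, IsDyckPath (p i)) ∧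
    (∑ i, ((p i).length : ℤ)) = 2 * n ∧
    ∀ i, pathHeight (p i) = a.get i}

/-- `Qx n x [a₀,…,a_k]` is `P n` evaluated at `a₀` copies of `x`, `a₁` copies of `x+1`, …,
`a_k` copies of `x+k`. -/
noncomputable def Qx (n : ℤ) (x : ℕ) (a : List ℕ) : ℕ :=
  P n (a.zipIdx.flatMap fun q => List.replicate q.1 (x + q.2))

/-- The grouped path-height function `Q n a = ∑_{x=0}^∞ Qx n x a`. Whenever some entry
of `a` is positive (as in every application below) all terms with `x > n` vanish, since
a Dyck path of height at least `x` has length at least `2x`; so the infinite sum equals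
its truncation at `x = n`. -/
noncomputable def Q (n : ℤ) (a : List ℕ) : ℕ :=
  ∑ x ∈ Finset.range (n.toNat + 1), Qx n x a

namespace DyckAux


def ps (p : List ℤ) (k : ℕ) : ℤ := (p.take k).sum

@[simp] lemma ps_zero (p : List ℤ) : ps p 0 = 0 := rfl

@[simp] lemma ps_nil (k : ℕ) : ps [] k = 0 := by simp [ps]

lemma ps_of_le {p : List ℤ} {k : ℕ} (h : p.length ≤ k) : ps p k = p.sum := by
  rw [ps, List.take_of_length_le h]

lemma ps_length (p : List ℤ) : ps p p.length = p.sum := ps_of_le le_rfl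

lemma ps_append (A B : List ℤ) (k : ℕ) :
    ps (A ++ B) k = ps A k + ps B (k - A.length) := by
  rw [ps, List.take_append, List.sum_append]; rfl

lemma ps_append_add (A B : List ℤ) (j : ℕ) :
    ps (A ++ B) (A.length + j) = A.sum + ps B j := by
  rw [ps_append, ps_of_le (by omega), Nat.add_sub_cancel_left]

lemma ps_succ {p : List ℤ} {k : ℕ} (h : k < p.length) :
    ps p (k + 1) = ps p k + p[k] := List.sum_take_succ _ _ _

lemma ps_take (p : List ℤ) (b t : ℕ) : ps (p.take b) t = ps p (min t b) := by
  rw [ps, List.take_take, ps]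

lemma ps_drop (p : List ℤ) (a t : ℕ) : ps (p.drop a) t = ps p (a + t) - ps p a := by
  rcases le_or_gt a p.length with ha | ha
  · have key : ps p (a + t) = ps (p.take a ++ p.drop a) (a + t) := by
      rw [List.take_append_drop]
    rw [ps_append] at key
    have hl : (p.take a).length = a := by simp [ha]
    rw [hl] at key
    have h2 : a + t - a = t := by omega
    rw [h2, ps_take] at key
    have h3 : min (a + t) a = a := by omega
    rw [h3] at key
    omega
  · rw [List.drop_eq_nil_of_le (le_of_lt ha), ps_of_le (by omega : p.length ≤ a + t),
      ps_of_le (le_of_lt ha)]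
    simp

lemma ps_take_drop (p : List ℤ) {a b : ℕ} (hab : a ≤ b) (t : ℕ) :
    ps ((p.take b).drop a) t = ps p (min (a + t) b) - ps p a := by
  rw [ps_drop, ps_take, ps_take, min_eq_left hab]

lemma ps_chain_le {X Y : List ℤ} {c : ℤ} (h1 : ∀ k, ps X k ≤ c)
    (h2 : ∀ j, X.sum + ps Y j ≤ c) : ∀ k, ps (X ++ Y) k ≤ c := by
  intro k
  rw [ps_append]
  rcases le_or_gt k X.length with h | h
  · have : k - X.length = 0 := by omega
    rw [this, ps_zero, add_zero]; exact h1 k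
  · rw [ps_of_le (le_of_lt h)]; exact h2 _

lemma ps_chain_ge {X Y : List ℤ} {c : ℤ} (h1 : ∀ k, c ≤ ps X k)
    (h2 : ∀ j, c ≤ X.sum + ps Y j) : ∀ k, c ≤ ps (X ++ Y) k := by
  intro k
  rw [ps_append]
  rcases le_or_gt k X.length with h | h
  · have : k - X.length = 0 := by omega
    rw [this, ps_zero, add_zero]; exact h1 k
  · rw [ps_of_le (le_of_lt h)]; exact h2 _

lemma ps_map_neg (p : List ℤ) (k : ℕ) : ps (p.map (fun x => -x)) k = -ps p k := by
  rw [ps, ← List.map_take, ps]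
  induction (p.take k) with
  | nil => simp
  | cons a t ih => simp [ih]; ring

lemma height_le_iff {p : List ℤ} {a : ℕ} : pathHeight p ≤ a ↔ ∀ k, ps p k ≤ (a : ℤ) := by
  constructor
  · intro h k
    rcases le_or_gt k p.length with hk | hk
    · have := Finset.sup_le_iff.mp h k (Finset.mem_range.mpr (by omega))
      exact Int.toNat_le.mp this
    · rw [ps_of_le (le_of_lt hk), ← ps_length]
      have := Finset.sup_le_iff.mp h p.length (Finset.mem_range.mpr (by omega))
      exact Int.toNat_le.mp this
  · intro h
    apply Finset.sup_le
    intro k _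
    exact Int.toNat_le.mpr (h k)

lemma le_height {p : List ℤ} {a : ℕ} (k : ℕ) (h : (a : ℤ) ≤ ps p k) : a ≤ pathHeight p := by
  have ha : (0:ℤ) ≤ (a:ℤ) := Int.natCast_nonneg a
  rcases le_or_gt k p.length with hk | hk
  · have hmem : k ∈ Finset.range (p.length + 1) := Finset.mem_range.mpr (by omega)
    have h1 : a ≤ (ps p k).toNat := (Int.le_toNat (le_trans ha h)).mpr h
    exact le_trans h1 (Finset.le_sup (f := fun k => ((p.take k).sum).toNat) hmem)
  · have h' : (a : ℤ) ≤ ps p p.length := by rwa [ps_length, ← ps_of_le (le_of_lt hk)]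
    have hmem : p.length ∈ Finset.range (p.length + 1) := Finset.mem_range.mpr (by omega)
    have h1 : a ≤ (ps p p.length).toNat := (Int.le_toNat (le_trans ha h')).mpr h'
    exact le_trans h1 (Finset.le_sup (f := fun k => ((p.take k).sum).toNat) hmem)

lemma height_exists {p : List ℤ} (hNN : ∀ k, 0 ≤ ps p k) :
    ∃ k ≤ p.length, ps p k = (pathHeight p : ℤ) := by
  obtain ⟨k, hk, hval⟩ := Finset.exists_mem_eq_sup (Finset.range (p.length + 1))
    ⟨0, Finset.mem_range.mpr (by omega)⟩ (fun k => ((p.take k).sum).toNat)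
  have hk' : k ≤ p.length := by have := Finset.mem_range.mp hk; omega
  refine ⟨k, hk', ?_⟩
  have : pathHeight p = (ps p k).toNat := hval
  rw [this, Int.toNat_of_nonneg (hNN k)]

lemma eq_nil_of_height_eq_zero {p : List ℤ} (hD : IsDyckPath p) (h : pathHeight p = 0) :
    p = [] := by
  cases p with
  | nil => rfl
  | cons x t =>
    exfalso
    have h1 : ps (x :: t) 1 = x := by simp [ps]
    have hx := hD.1 x (by simp)
    have hnn := hD.2.1 1
    have hps : (0:ℤ) ≤ ps (x :: t) 1 := hnn
    have hx1 : x = 1 := by rcases hx with h' | h' <;> omega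
    have hge : (1:ℕ) ≤ pathHeight (x :: t) := le_height 1 (by rw [h1, hx1]; norm_num)
    omega



lemma ps_single (z : ℤ) (t : ℕ) : ps [z] t = if t = 0 then 0 else z := by
  cases t with
  | zero => simp
  | succ n =>
    rw [ps_of_le (by simp)]
    simp

abbrev SideA (a : ℕ) := {π : List ℤ // IsDyckPath π ∧ pathHeight π = a}
abbrev SideB (a : ℕ) := {st : List ℤ × List ℤ // IsDyckPath st.1 ∧ IsDyckPath st.2 ∧
    pathHeight st.1 = a - 1 ∧ 1 ≤ pathHeight st.2 ∧ pathHeight st.2 ≤ a}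

section Core
variable (a : ℕ)

lemma dyck_nn {p : List ℤ} (h : IsDyckPath p) : ∀ k, 0 ≤ ps p k := h.2.1

lemma exI (x : SideA a) : ∃ k, ps x.1 k = (a : ℤ) := by
  obtain ⟨k, _, hk⟩ := height_exists (dyck_nn x.2.1)
  exact ⟨k, by rw [hk, x.2.2]⟩

noncomputable def I (x : SideA a) : ℕ := Nat.find (exI a x)
noncomputable def J (x : SideA a) : ℕ := Nat.findGreatest (fun t => ps x.1 t = 0) (I a x - 1)
noncomputable def K (x : SideA a) : ℕ := Nat.findGreatest (fun t => ps x.1 t = (a:ℤ)) x.1.length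

variable (x : SideA a) (ha : 1 ≤ a)
include ha
set_option linter.unusedSectionVars false

lemma fle : ∀ t, ps x.1 t ≤ (a : ℤ) := height_le_iff.mp (le_of_eq x.2.2)

lemma fI : ps x.1 (I a x) = a := Nat.find_spec (exI a x)

lemma fImin : ∀ t < I a x, ps x.1 t ≠ (a:ℤ) := fun t ht => Nat.find_min (exI a x) ht

lemma fIpos : 1 ≤ I a x := by
  rcases Nat.eq_zero_or_pos (I a x) with h | h
  · exfalso
    have h2 := fI a x ha
    rw [h, ps_zero] at h2
    omega
  · exact h

lemma fIlen : I a x ≤ x.1.length := by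
  by_contra h
  have h1 := fI a x ha
  rw [ps_of_le (by omega), x.2.1.2.2] at h1
  omega

lemma fIm1 : ps x.1 (I a x - 1) = (a:ℤ) - 1 ∧
    x.1[I a x - 1]'(by have := fIlen a x ha; have := fIpos a x ha; omega) = 1 := by
  have h1 : I a x - 1 < x.1.length := by have := fIlen a x ha; have := fIpos a x ha; omega
  have h2 : ps x.1 (I a x - 1 + 1) = ps x.1 (I a x - 1) + x.1[I a x - 1] := ps_succ h1
  have h3 : I a x - 1 + 1 = I a x := by have := fIpos a x ha; omega
  rw [h3] at h2
  have h4 := fI a x ha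
  have h5 := fImin a x ha (I a x - 1) (by have := fIpos a x ha; omega)
  have h6 := x.2.1.1 _ (List.getElem_mem h1)
  have h7 := fle a x ha (I a x - 1)
  constructor <;> omega

lemma fJ : ps x.1 (J a x) = 0 := by
  unfold J
  exact Nat.findGreatest_spec (P := fun t => ps x.1 t = 0) (m := 0) (Nat.zero_le _) (ps_zero x.1)

lemma fJle : J a x ≤ I a x - 1 := by
  unfold J
  exact Nat.findGreatest_le _

lemma fJ3 : ∀ t, J a x < t → t ≤ I a x → 1 ≤ ps x.1 t := by
  intro t h1 h2
  rcases eq_or_lt_of_le h2 with rfl | h2'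
  · rw [fI a x ha]; exact_mod_cast ha
  · have h3 : ps x.1 t ≠ 0 := by
      have hle : t ≤ I a x - 1 := by omega
      unfold J at h1
      exact Nat.findGreatest_is_greatest (P := fun t => ps x.1 t = 0) (n := I a x - 1) (k := t) h1 hle
    have h4 := dyck_nn x.2.1 t
    omega

lemma fK : ps x.1 (K a x) = a := by
  unfold K
  exact Nat.findGreatest_spec (P := fun t => ps x.1 t = (a:ℤ)) (m := I a x) (fIlen a x ha) (fI a x ha)

lemma fKlen : K a x < x.1.length := by
  have h1 : K a x ≤ x.1.length := by unfold K; exact Nat.findGreatest_le _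
  rcases eq_or_lt_of_le h1 with h | h
  · exfalso
    have h2 := fK a x ha
    rw [h, ps_length, x.2.1.2.2] at h2
    omega
  · exact h

lemma fIK : I a x ≤ K a x := by
  by_contra h
  unfold K at h
  exact Nat.findGreatest_is_greatest (P := fun t => ps x.1 t = (a:ℤ)) (by omega) (fIlen a x ha) (fI a x ha)

lemma fK3 : ∀ t, K a x < t → ps x.1 t ≤ (a:ℤ) - 1 := by
  intro t ht
  rcases le_or_gt t x.1.length with h | h
  · have h1 : ps x.1 t ≠ a := by
      unfold K at ht
      exact Nat.findGreatest_is_greatest (P := fun t => ps x.1 t = (a:ℤ)) ht h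
    have h2 := fle a x ha t
    omega
  · rw [ps_of_le (le_of_lt h), x.2.1.2.2]
    omega


noncomputable def dL : List ℤ := x.1.take (J a x)
noncomputable def AL : List ℤ := (x.1.take (I a x)).drop (J a x + 1)
noncomputable def ML : List ℤ := (x.1.take (K a x)).drop (I a x)
noncomputable def BL : List ℤ := x.1.drop (K a x + 1)

lemma fJlen : J a x < x.1.length := by
  have h1 := fJle a x ha
  have h2 := fIpos a x ha
  have h3 := fIlen a x ha
  omega

lemma fJI : J a x + 1 ≤ I a x := by
  have := fJle a x
  have := fIpos a x ha
  omega

omit ha in lemma psd : ∀ t, ps (dL a x) t = ps x.1 (min t (J a x)) := fun t => ps_take _ _ _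

lemma lend : (dL a x).length = J a x := by
  simp [dL]
  exact le_of_lt (fJlen a x ha)

lemma sumd : (dL a x).sum = 0 := by
  rw [← ps_length, lend a x ha, psd]
  simpa using fJ a x ha

lemma stepJ : (x.1.take (I a x)).drop (J a x) = 1 :: AL a x := by
  have hIlen : (x.1.take (I a x)).length = I a x := by
    simp [fIlen a x ha]
  have hJlt : J a x < (x.1.take (I a x)).length := by
    rw [hIlen]; have := fJI a x ha; omega
  have h1 := List.drop_eq_getElem_cons hJlt
  have hJlen := fJlen a x ha
  have h2 : (x.1.take (I a x))[J a x] = x.1[J a x]'hJlen := by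
    rw [List.getElem_take]
  have h3 : x.1[J a x]'hJlen = 1 := by
    have hs := ps_succ hJlen
    rw [fJ a x ha] at hs
    have h4 := fJ3 a x ha (J a x + 1) (by omega) (fJI a x ha)
    have h5 := x.2.1.1 _ (List.getElem_mem (fJlen a x ha))
    omega
  rw [h1, h2, h3]
  rfl

lemma psA : ∀ t, ps (AL a x) t = ps x.1 (min (J a x + 1 + t) (I a x)) - 1 := by
  intro t
  have h0 : ps ((x.1.take (I a x)).drop (J a x)) (1 + t)
      = ps x.1 (min (J a x + (1 + t)) (I a x)) - ps x.1 (J a x) := by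
    rw [ps_take_drop x.1 (by have := fJI a x ha; omega) (1 + t)]
  rw [stepJ a x ha] at h0
  have h1 : ps (1 :: AL a x) (1 + t) = 1 + ps (AL a x) t := by
    have := ps_append_add [1] (AL a x) t
    simpa using this
  rw [h1, fJ a x ha] at h0
  have : J a x + (1 + t) = J a x + 1 + t := by omega
  rw [this] at h0
  omega

lemma lenA : (AL a x).length = I a x - (J a x + 1) := by
  simp [AL, fIlen a x ha]

lemma sumA : (AL a x).sum = (a : ℤ) - 1 := by
  rw [← ps_length, lenA a x ha, psA a x ha]
  have h1 : J a x + 1 + (I a x - (J a x + 1)) = I a x := by have := fJI a x ha; omega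
  rw [h1, min_self, fI a x ha]

lemma psM : ∀ t, ps (ML a x) t = ps x.1 (min (I a x + t) (K a x)) - (a:ℤ) := by
  intro t
  rw [ML, ps_take_drop x.1 (fIK a x ha) t, fI a x ha]

lemma lenM : (ML a x).length = K a x - I a x := by
  simp [ML, le_of_lt (fKlen a x ha)]

lemma sumM : (ML a x).sum = 0 := by
  rw [← ps_length, lenM a x ha, psM a x ha]
  have h1 : I a x + (K a x - I a x) = K a x := by have := fIK a x ha; omega
  rw [h1, min_self, fK a x ha]
  ring

lemma psK1 : ps x.1 (K a x + 1) = (a:ℤ) - 1 ∧ x.1[K a x]'(fKlen a x ha) = -1 := by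
  have hKlen := fKlen a x ha
  have hs := ps_succ hKlen
  rw [fK a x ha] at hs
  have h1 := fK3 a x ha (K a x + 1) (by omega)
  have h2 := x.2.1.1 _ (List.getElem_mem (fKlen a x ha))
  constructor <;> omega

lemma psB : ∀ t, ps (BL a x) t = ps x.1 (K a x + 1 + t) - ((a:ℤ) - 1) := by
  intro t
  rw [BL, ps_drop, (psK1 a x ha).1]

omit ha in lemma lenB : (BL a x).length = x.1.length - (K a x + 1) := by simp [BL]

lemma sumB : (BL a x).sum = 1 - (a:ℤ) := by
  rw [← ps_length, lenB a x, psB a x ha]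
  have h1 : K a x + 1 + (x.1.length - (K a x + 1)) = x.1.length := by
    have := fKlen a x ha; omega
  rw [h1, ps_length, x.2.1.2.2]
  ring

lemma stepK : x.1.drop (K a x) = -1 :: BL a x := by
  have h1 := List.drop_eq_getElem_cons (fKlen a x ha)
  rw [(psK1 a x ha).2] at h1
  exact h1

noncomputable def sigX : List ℤ := AL a x ++ BL a x
noncomputable def tauX : List ℤ := [1] ++ (dL a x ++ ([-1] ++ (ML a x).map (fun z => -z)))

lemma steps_sigX : ∀ s ∈ sigX a x, s = 1 ∨ s = -1 := by
  intro s hs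
  rcases List.mem_append.mp hs with h | h
  · exact x.2.1.1 _ (List.mem_of_mem_take (List.mem_of_mem_drop h))
  · exact x.2.1.1 _ (List.mem_of_mem_drop h)

lemma steps_tauX : ∀ s ∈ tauX a x, s = 1 ∨ s = -1 := by
  intro s hs
  simp only [tauX, List.mem_append, List.mem_singleton, List.mem_map] at hs
  rcases hs with h | h | h | ⟨z, hz, rfl⟩
  · left; exact h
  · exact x.2.1.1 _ (List.mem_of_mem_take h)
  · right; exact h
  · rcases x.2.1.1 _ (List.mem_of_mem_take (List.mem_of_mem_drop hz)) with h | h <;>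
      simp [h]

lemma nn_sigX : ∀ t, 0 ≤ ps (sigX a x) t := by
  apply ps_chain_ge
  · intro t
    rw [psA a x ha]
    have h1 : 1 ≤ ps x.1 (min (J a x + 1 + t) (I a x)) := by
      apply fJ3 a x ha
      · have := fJI a x ha; omega
      · omega
    omega
  · intro j
    rw [sumA a x ha, psB a x ha]
    have := dyck_nn x.2.1 (K a x + 1 + j)
    omega

lemma sum_sigX : (sigX a x).sum = 0 := by
  rw [sigX, List.sum_append, sumA a x ha, sumB a x ha]
  ring

lemma height_sigX : pathHeight (sigX a x) = a - 1 := by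
  have hle : pathHeight (sigX a x) ≤ a - 1 := by
    apply height_le_iff.mpr
    have hcast : ((a - 1 : ℕ) : ℤ) = (a:ℤ) - 1 := by
      have := ha; push_cast; omega
    rw [hcast]
    apply ps_chain_le
    · intro t
      rw [psA a x ha]
      have := fle a x ha (min (J a x + 1 + t) (I a x))
      omega
    · intro j
      rw [sumA a x ha, psB a x ha]
      have := fK3 a x ha (K a x + 1 + j) (by omega)
      omega
  have hge : a - 1 ≤ pathHeight (sigX a x) := by
    apply le_height (AL a x).length
    have h1 : ps (sigX a x) ((AL a x).length) = (a:ℤ) - 1 := by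
      have h2 := ps_append_add (AL a x) (BL a x) 0
      rw [ps_zero, add_zero, sumA a x ha] at h2
      rw [sigX]
      omega
    rw [h1]
    have := ha; push_cast; omega
  omega

lemma dyck_sigX : IsDyckPath (sigX a x) :=
  ⟨steps_sigX a x ha, nn_sigX a x ha, sum_sigX a x ha⟩

lemma ps_x_le_Im1 : ∀ u, u < I a x → ps x.1 u ≤ (a:ℤ) - 1 := by
  intro u hu
  have h1 := fImin a x ha u hu
  have h2 := fle a x ha u
  omega

lemma nn_tauX : ∀ t, 0 ≤ ps (tauX a x) t := by
  apply ps_chain_ge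
  · intro t
    rw [ps_single]
    split <;> omega
  · intro j
    have h1 : (List.sum [(1:ℤ)]) = 1 := by simp
    rw [h1]
    have h2 : (-1:ℤ) ≤ ps (dL a x ++ ([-1] ++ (ML a x).map (fun z => -z))) j := by
      apply ps_chain_ge
      · intro t
        rw [psd a x]
        have := dyck_nn x.2.1 (min t (J a x))
        omega
      · intro j2
        rw [sumd a x ha, zero_add]
        apply ps_chain_ge
        · intro t
          rw [ps_single]
          split <;> omega
        · intro j3
          have h3 : (List.sum [(-1:ℤ)]) = -1 := by simp
          rw [h3, ps_map_neg, psM a x ha]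
          have := fle a x ha (min (I a x + j3) (K a x))
          omega
    omega

lemma sum_tauX : (tauX a x).sum = 0 := by
  simp only [tauX, List.sum_append, List.sum_cons, List.sum_nil, sumd a x ha]
  have h1 : ((ML a x).map (fun z => -z)).sum = -(ML a x).sum := by
    rw [← ps_length, List.length_map, ps_map_neg, ps_length]
  rw [h1, sumM a x ha]
  ring

lemma height_tauX_ge : 1 ≤ pathHeight (tauX a x) := by
  apply le_height 1
  have h1 : ps (tauX a x) 1 = 1 := by
    rw [tauX, ps_append, ps_single]
    simp
  rw [h1]
  norm_num

lemma height_tauX_le : pathHeight (tauX a x) ≤ a := by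
  apply height_le_iff.mpr
  apply ps_chain_le
  · intro t
    rw [ps_single]
    split
    · omega
    · exact_mod_cast ha
  · intro j
    have h1 : (List.sum [(1:ℤ)]) = 1 := by simp
    rw [h1]
    have h2 : ps (dL a x ++ ([-1] ++ (ML a x).map (fun z => -z))) j ≤ (a:ℤ) - 1 := by
      apply ps_chain_le
      · intro t
        rw [psd a x]
        apply ps_x_le_Im1 a x ha
        have := fJI a x ha
        omega
      · intro j2
        rw [sumd a x ha, zero_add]
        apply ps_chain_le
        · intro t
          rw [ps_single]
          split <;> omega
        · intro j3
          have h3 : (List.sum [(-1:ℤ)]) = -1 := by simp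
          rw [h3, ps_map_neg, psM a x ha]
          have := dyck_nn x.2.1 (min (I a x + j3) (K a x))
          omega
    omega

lemma dyck_tauX : IsDyckPath (tauX a x) :=
  ⟨steps_tauX a x ha, nn_tauX a x ha, sum_tauX a x ha⟩

lemma len_sigX_tauX : (sigX a x).length + (tauX a x).length = x.1.length := by
  have h1 := lenA a x ha
  have h2 := lenB a x
  have h3 := lend a x ha
  have h4 := lenM a x ha
  have h5 := fJI a x ha
  have h6 := fIK a x ha
  have h7 := fKlen a x ha
  simp only [sigX, tauX, List.length_append, List.length_map, List.length_singleton]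
  omega

noncomputable def spB : SideB a :=
  ⟨(sigX a x, tauX a x), dyck_sigX a x ha, dyck_tauX a x ha, height_sigX a x ha,
    height_tauX_ge a x ha, height_tauX_le a x ha⟩

lemma pi_surgery : x.1 = dL a x ++ ([1] ++ (AL a x ++ (ML a x ++ ([-1] ++ BL a x)))) := by
  have h1 : x.1 = x.1.take (J a x) ++ x.1.drop (J a x) := (List.take_append_drop _ _).symm
  have h2 : x.1.drop (J a x) = (x.1.take (I a x)).drop (J a x) ++ x.1.drop (I a x) := by
    conv_lhs => rw [← List.take_append_drop (I a x) x.1]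
    rw [List.drop_append]
    have h3 : J a x - (x.1.take (I a x)).length = 0 := by
      simp [fIlen a x ha]
      have := fJI a x ha
      omega
    rw [h3, List.drop_zero]
  have h4 : x.1.drop (I a x) = (x.1.take (K a x)).drop (I a x) ++ x.1.drop (K a x) := by
    conv_lhs => rw [← List.take_append_drop (K a x) x.1]
    rw [List.drop_append]
    have h5 : I a x - (x.1.take (K a x)).length = 0 := by
      simp [le_of_lt (fKlen a x ha)]
      have := fIK a x ha
      omega
    rw [h5, List.drop_zero]
  rw [stepJ a x ha] at h2
  rw [stepK a x ha] at h4
  calc x.1 = x.1.take (J a x) ++ x.1.drop (J a x) := h1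
  _ = dL a x ++ (1 :: AL a x ++ x.1.drop (I a x)) := by rw [← h2]; rfl
  _ = _ := by rw [h4]; simp [ML, BL]


end Core

section CoreB
variable (a : ℕ) (ha : 1 ≤ a) (y : SideB a)
include ha
set_option linter.unusedSectionVars false

omit ha in lemma height_nil : pathHeight ([] : List ℤ) = 0 := by
  simp [pathHeight]

lemma gSle : ∀ t, ps y.1.1 t ≤ (a:ℤ) - 1 := by
  intro t
  have h := height_le_iff.mp (le_of_eq y.2.2.2.1) t
  have : ((a - 1 : ℕ) : ℤ) = (a:ℤ) - 1 := by push_cast [ha]; ring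
  omega

lemma gTle : ∀ t, ps y.1.2 t ≤ (a:ℤ) := height_le_iff.mp y.2.2.2.2.2

lemma exS : ∃ k, ps y.1.1 k = (a:ℤ) - 1 := by
  obtain ⟨k, _, hk⟩ := height_exists (dyck_nn y.2.1)
  refine ⟨k, ?_⟩
  rw [hk, y.2.2.2.1]
  push_cast [ha]; ring

lemma tau_ne_nil : y.1.2 ≠ [] := by
  intro h
  have h1 := y.2.2.2.2.1
  rw [h, height_nil] at h1
  omega

lemma tau_len_pos : 1 ≤ y.1.2.length :=
  List.length_pos_iff.mpr (tau_ne_nil a ha y)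

lemma exR : ∃ k, 1 ≤ k ∧ ps y.1.2 k = 0 :=
  ⟨y.1.2.length, tau_len_pos a ha y, by rw [ps_length, y.2.2.1.2.2]⟩

noncomputable def sN : ℕ := Nat.find (exS a ha y)
noncomputable def rN : ℕ := Nat.find (exR a ha y)

lemma gS0 : ps y.1.1 (sN a ha y) = (a:ℤ) - 1 := Nat.find_spec (exS a ha y)

lemma gSmin : ∀ t < sN a ha y, ps y.1.1 t ≠ (a:ℤ) - 1 :=
  fun t ht => Nat.find_min (exS a ha y) ht

lemma gSlen : sN a ha y ≤ y.1.1.length := by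
  by_contra h
  have h1 := gS0 a ha y
  rw [ps_of_le (by omega), y.2.1.2.2] at h1
  have h2 : sN a ha y ≤ 0 := Nat.find_min' (exS a ha y) (by rw [ps_zero]; omega)
  omega

lemma gR1 : 1 ≤ rN a ha y := (Nat.find_spec (exR a ha y)).1

lemma gR0 : ps y.1.2 (rN a ha y) = 0 := (Nat.find_spec (exR a ha y)).2

lemma gRlen : rN a ha y ≤ y.1.2.length :=
  Nat.find_min' (exR a ha y) ⟨tau_len_pos a ha y, by rw [ps_length, y.2.2.1.2.2]⟩

lemma gT1 : ps y.1.2 1 = 1 := by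
  have hlen : 0 < y.1.2.length := tau_len_pos a ha y
  have hs := ps_succ hlen
  norm_num [ps_zero] at hs
  have h1 := y.2.2.1.1 _ (List.getElem_mem hlen)
  have h2 := dyck_nn y.2.2.1 1
  omega

lemma gR2 : 2 ≤ rN a ha y := by
  have h1 := gR1 a ha y
  rcases eq_or_lt_of_le h1 with h | h
  · exfalso
    have := gR0 a ha y
    rw [← h, gT1 a ha y] at this
    omega
  · omega

lemma gRpos : ∀ k, 1 ≤ k → k ≤ rN a ha y - 1 → 1 ≤ ps y.1.2 k := by
  intro k hk1 hk2
  have hk3 : k < rN a ha y := by have := gR2 a ha y; omega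
  have h1 : ¬(1 ≤ k ∧ ps y.1.2 k = 0) := by
    unfold rN at hk3
    exact Nat.find_min (exR a ha y) hk3
  have h1' : ps y.1.2 k ≠ 0 := fun hc => h1 ⟨hk1, hc⟩
  have h2 := dyck_nn y.2.2.1 k
  omega

lemma gRm1 : ps y.1.2 (rN a ha y - 1) = 1 ∧
    y.1.2[rN a ha y - 1]'(by have := gRlen a ha y; have := gR2 a ha y; omega) = -1 := by
  have hlt : rN a ha y - 1 < y.1.2.length := by
    have := gRlen a ha y; have := gR2 a ha y; omega
  have hs := ps_succ hlt
  have h3 : rN a ha y - 1 + 1 = rN a ha y := by have := gR2 a ha y; omega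
  rw [h3, gR0 a ha y] at hs
  have h4 := gRpos a ha y (rN a ha y - 1) (by have := gR2 a ha y; omega) le_rfl
  have h5 := y.2.2.1.1 _ (List.getElem_mem hlt)
  constructor <;> omega

noncomputable def dB : List ℤ := (y.1.2.take (rN a ha y - 1)).drop 1
noncomputable def muB : List ℤ := y.1.2.drop (rN a ha y)
noncomputable def AB : List ℤ := y.1.1.take (sN a ha y)
noncomputable def BB : List ℤ := y.1.1.drop (sN a ha y)
noncomputable def asmL : List ℤ :=
  dB a ha y ++ ([1] ++ (AB a ha y ++ ((muB a ha y).map (fun z => -z) ++ ([-1] ++ BB a ha y))))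

lemma psdB : ∀ t, ps (dB a ha y) t = ps y.1.2 (min (1 + t) (rN a ha y - 1)) - 1 := by
  intro t
  rw [dB, ps_take_drop y.1.2 (by have := gR2 a ha y; omega) t, gT1 a ha y]

lemma lendB : (dB a ha y).length = rN a ha y - 2 := by
  simp [dB]
  have := gRlen a ha y; have := gR2 a ha y
  omega

lemma sumdB : (dB a ha y).sum = 0 := by
  rw [← ps_length, lendB a ha y, psdB a ha y]
  have h1 : min (1 + (rN a ha y - 2)) (rN a ha y - 1) = rN a ha y - 1 := by
    have := gR2 a ha y; omega
  rw [h1, (gRm1 a ha y).1]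
  ring

lemma psmuB : ∀ t, ps (muB a ha y) t = ps y.1.2 (rN a ha y + t) := by
  intro t
  rw [muB, ps_drop, gR0 a ha y]
  ring

lemma lenmuB : (muB a ha y).length = y.1.2.length - rN a ha y := by simp [muB]

lemma summuB : (muB a ha y).sum = 0 := by
  rw [← ps_length, lenmuB a ha y, psmuB a ha y]
  have h1 : rN a ha y + (y.1.2.length - rN a ha y) = y.1.2.length := by
    have := gRlen a ha y; omega
  rw [h1, ps_length, y.2.2.1.2.2]

lemma psAB : ∀ t, ps (AB a ha y) t = ps y.1.1 (min t (sN a ha y)) := fun t => ps_take _ _ _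

lemma lenAB : (AB a ha y).length = sN a ha y := by
  simp [AB, gSlen a ha y]

lemma sumAB : (AB a ha y).sum = (a:ℤ) - 1 := by
  rw [← ps_length, lenAB a ha y, psAB a ha y, min_self, gS0 a ha y]

lemma psBB : ∀ t, ps (BB a ha y) t = ps y.1.1 (sN a ha y + t) - ((a:ℤ) - 1) := by
  intro t
  rw [BB, ps_drop, gS0 a ha y]

lemma lenBB : (BB a ha y).length = y.1.1.length - sN a ha y := by simp [BB]

lemma sumBB : (BB a ha y).sum = 1 - (a:ℤ) := by
  rw [← ps_length, lenBB a ha y, psBB a ha y]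
  have h1 : sN a ha y + (y.1.1.length - sN a ha y) = y.1.1.length := by
    have := gSlen a ha y; omega
  rw [h1, ps_length, y.2.1.2.2]
  ring

lemma len_asmL : (asmL a ha y).length = y.1.1.length + y.1.2.length := by
  have h1 := lendB a ha y
  have h2 := lenmuB a ha y
  have h3 := lenAB a ha y
  have h4 := lenBB a ha y
  have h5 := gR2 a ha y
  have h6 := gRlen a ha y
  have h7 := gSlen a ha y
  simp only [asmL, List.length_append, List.length_map, List.length_singleton]
  omega

lemma steps_asmL : ∀ s ∈ asmL a ha y, s = 1 ∨ s = -1 := by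
  intro s hs
  simp only [asmL, List.mem_append, List.mem_singleton, List.mem_map] at hs
  rcases hs with h | h | h | ⟨z, hz, rfl⟩ | h | h
  · exact y.2.2.1.1 _ (List.mem_of_mem_take (List.mem_of_mem_drop h))
  · left; exact h
  · exact y.2.1.1 _ (List.mem_of_mem_take h)
  · rcases y.2.2.1.1 _ (List.mem_of_mem_drop hz) with h | h <;> simp [h]
  · right; exact h
  · exact y.2.1.1 _ (List.mem_of_mem_drop h)

lemma sum_asmL : (asmL a ha y).sum = 0 := by
  have hm : ((muB a ha y).map (fun z => -z)).sum = 0 := by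
    rw [← ps_length, List.length_map, ps_map_neg, ps_length, summuB a ha y]
    ring
  simp only [asmL, List.sum_append, List.sum_cons, List.sum_nil,
    sumdB a ha y, sumAB a ha y, sumBB a ha y, hm]
  ring

lemma nn_asmL : ∀ t, 0 ≤ ps (asmL a ha y) t := by
  apply ps_chain_ge
  · intro t
    rw [psdB a ha y]
    have h1 : 1 ≤ ps y.1.2 (min (1 + t) (rN a ha y - 1)) := by
      apply gRpos a ha y
      · have := gR2 a ha y; omega
      · have := gR2 a ha y; omega
    omega
  · intro j
    rw [sumdB a ha y, zero_add]
    apply ps_chain_ge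
    · intro t
      rw [ps_single]; split <;> omega
    · intro j2
      have h1 : (List.sum [(1:ℤ)]) = 1 := by simp
      rw [h1]
      have h2 : (-1:ℤ) ≤ ps (AB a ha y ++ ((muB a ha y).map (fun z => -z) ++ ([-1] ++ BB a ha y))) j2 := by
        apply ps_chain_ge
        · intro t
          rw [psAB a ha y]
          have := dyck_nn y.2.1 (min t (sN a ha y))
          omega
        · intro j3
          rw [sumAB a ha y]
          have h3 : -(a:ℤ) ≤ ps ((muB a ha y).map (fun z => -z) ++ ([-1] ++ BB a ha y)) j3 := by
            apply ps_chain_ge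
            · intro t
              rw [ps_map_neg, psmuB a ha y]
              have := gTle a ha y (rN a ha y + t)
              omega
            · intro j4
              have hm : ((muB a ha y).map (fun z => -z)).sum = 0 := by
                rw [← ps_length, List.length_map, ps_map_neg, ps_length, summuB a ha y]; ring
              rw [hm, zero_add]
              apply ps_chain_ge
              · intro t
                have hha := ha
                rw [ps_single]; split <;> omega
              · intro j5
                have h4 : (List.sum [(-1:ℤ)]) = -1 := by simp
                rw [h4, psBB a ha y]
                have := dyck_nn y.2.1 (sN a ha y + j5)
                omega
          omega
      omega

lemma le_asmL : ∀ t, ps (asmL a ha y) t ≤ (a:ℤ) := by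
  apply ps_chain_le
  · intro t
    rw [psdB a ha y]
    have := gTle a ha y (min (1 + t) (rN a ha y - 1))
    omega
  · intro j
    rw [sumdB a ha y, zero_add]
    apply ps_chain_le
    · intro t
      rw [ps_single]; split
      · omega
      · exact_mod_cast ha
    · intro j2
      have h1 : (List.sum [(1:ℤ)]) = 1 := by simp
      rw [h1]
      have h2 : ps (AB a ha y ++ ((muB a ha y).map (fun z => -z) ++ ([-1] ++ BB a ha y))) j2 ≤ (a:ℤ) - 1 := by
        apply ps_chain_le
        · intro t
          rw [psAB a ha y]
          exact gSle a ha y (min t (sN a ha y))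
        · intro j3
          rw [sumAB a ha y]
          have h3 : ps ((muB a ha y).map (fun z => -z) ++ ([-1] ++ BB a ha y)) j3 ≤ 0 := by
            apply ps_chain_le
            · intro t
              rw [ps_map_neg, psmuB a ha y]
              have := dyck_nn y.2.2.1 (rN a ha y + t)
              omega
            · intro j4
              have hm : ((muB a ha y).map (fun z => -z)).sum = 0 := by
                rw [← ps_length, List.length_map, ps_map_neg, ps_length, summuB a ha y]; ring
              rw [hm, zero_add]
              apply ps_chain_le
              · intro t
                rw [ps_single]; split <;> omega
              · intro j5
                have h4 : (List.sum [(-1:ℤ)]) = -1 := by simp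
                rw [h4, psBB a ha y]
                have := gSle a ha y (sN a ha y + j5)
                omega
          omega
      omega

lemma key_asmL : ps (asmL a ha y)
    ((dB a ha y).length + (1 + ((AB a ha y).length + ((muB a ha y).map (fun z => -z)).length))) = (a:ℤ) := by
  rw [asmL, ps_append_add]
  have h1 : ps ([1] ++ (AB a ha y ++ ((muB a ha y).map (fun z => -z) ++ ([-1] ++ BB a ha y))))
      (1 + ((AB a ha y).length + ((muB a ha y).map (fun z => -z)).length))
      = 1 + ps (AB a ha y ++ ((muB a ha y).map (fun z => -z) ++ ([-1] ++ BB a ha y)))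
        ((AB a ha y).length + ((muB a ha y).map (fun z => -z)).length) := by
    have := ps_append_add [1] (AB a ha y ++ ((muB a ha y).map (fun z => -z) ++ ([-1] ++ BB a ha y)))
      ((AB a ha y).length + ((muB a ha y).map (fun z => -z)).length)
    simpa using this
  rw [h1, ps_append_add]
  have h2 : ps ((muB a ha y).map (fun z => -z) ++ ([-1] ++ BB a ha y))
      (((muB a ha y).map (fun z => -z)).length) = 0 := by
    have := ps_append_add ((muB a ha y).map (fun z => -z)) ([-1] ++ BB a ha y) 0
    rw [ps_zero, add_zero] at this
    rw [this, ← ps_length, List.length_map, ps_map_neg, ps_length, summuB a ha y]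
    ring
  rw [h2, sumdB a ha y, sumAB a ha y]
  ring

lemma height_asmL : pathHeight (asmL a ha y) = a := by
  have h1 : pathHeight (asmL a ha y) ≤ a := height_le_iff.mpr (le_asmL a ha y)
  have h2 : a ≤ pathHeight (asmL a ha y) := le_height _ (le_of_eq (key_asmL a ha y).symm)
  omega

lemma dyck_asmL : IsDyckPath (asmL a ha y) :=
  ⟨steps_asmL a ha y, nn_asmL a ha y, sum_asmL a ha y⟩

noncomputable def asmA : SideA a := ⟨asmL a ha y, dyck_asmL a ha y, height_asmL a ha y⟩

lemma tau_surgery : y.1.2 = [1] ++ (dB a ha y ++ ([-1] ++ muB a ha y)) := by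
  have hlt : rN a ha y - 1 < y.1.2.length := by
    have := gRlen a ha y; have := gR2 a ha y; omega
  have h1 : y.1.2 = y.1.2.take (rN a ha y - 1) ++ y.1.2.drop (rN a ha y - 1) :=
    (List.take_append_drop _ _).symm
  have h2 : y.1.2.drop (rN a ha y - 1) = -1 :: muB a ha y := by
    have h3 := List.drop_eq_getElem_cons hlt
    rw [(gRm1 a ha y).2] at h3
    have h4 : rN a ha y - 1 + 1 = rN a ha y := by have := gR2 a ha y; omega
    rw [h4] at h3
    exact h3
  have h5 : y.1.2.take (rN a ha y - 1) = 1 :: dB a ha y := by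
    have hlen : 0 < (y.1.2.take (rN a ha y - 1)).length := by
      simp
      constructor
      · have := gR2 a ha y; omega
      · omega
    have h6 := List.drop_eq_getElem_cons hlen
    rw [List.drop_zero] at h6
    have h7 : (y.1.2.take (rN a ha y - 1))[0]'hlen = y.1.2[0]'(by omega) := by
      rw [List.getElem_take]
    have h8 : y.1.2[0]'(by omega) = 1 := by
      have hs := ps_succ (show 0 < y.1.2.length by omega)
      rw [ps_zero, gT1 a ha y] at hs
      omega
    rw [h7, h8] at h6
    exact h6
  rw [h1, h2, h5]
  rfl

end CoreB

section RT1
variable (a : ℕ) (x : SideA a) (ha : 1 ≤ a)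
include ha
set_option linter.unusedSectionVars false

lemma spB_fst : (spB a x ha).1.1 = sigX a x := rfl
lemma spB_snd : (spB a x ha).1.2 = tauX a x := rfl

lemma ps_sigX_len : ps (sigX a x) ((AL a x).length) = (a:ℤ) - 1 := by
  have h2 := ps_append_add (AL a x) (BL a x) 0
  simp only [ps_zero, add_zero, Nat.add_zero] at h2
  rw [sigX, h2, sumA a x ha]

lemma sN_spB : sN a ha (spB a x ha) = (AL a x).length := by
  unfold sN
  rw [Nat.find_eq_iff]
  constructor
  · rw [spB_fst, ps_sigX_len a x ha]
  · intro t ht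
    rw [spB_fst]
    have hlen : t - (AL a x).length = 0 := by omega
    have h1 : ps (sigX a x) t = ps (AL a x) t := by
      rw [sigX, ps_append, hlen, ps_zero, add_zero]
    rw [h1, psA a x ha]
    have h2 : t < I a x - (J a x + 1) := by rw [← lenA a x ha]; exact ht
    have h3 : min (J a x + 1 + t) (I a x) = J a x + 1 + t := by
      have := fJI a x ha; omega
    rw [h3]
    have h4 := fImin a x ha (J a x + 1 + t) (by have := fJI a x ha; omega)
    omega

lemma ps_tauX_mid : ∀ u, ps (tauX a x) (1 + u) =
    1 + ps (dL a x ++ ([-1] ++ (ML a x).map (fun z => -z))) u := by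
  intro u
  have := ps_append_add [1] (dL a x ++ ([-1] ++ (ML a x).map (fun z => -z))) u
  simpa [tauX] using this

lemma rN_spB : rN a ha (spB a x ha) = J a x + 2 := by
  unfold rN
  rw [Nat.find_eq_iff]
  refine ⟨⟨by omega, ?_⟩, ?_⟩
  · rw [spB_snd]
    have h0 : J a x + 2 = 1 + (J a x + 1) := by omega
    rw [h0, ps_tauX_mid a x ha]
    have h1 : J a x + 1 = (dL a x).length + 1 := by rw [lend a x ha]
    rw [h1, ps_append_add]
    have h2 : ps ([-1] ++ (ML a x).map (fun z => -z)) 1 = -1 := by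
      rw [ps_append, ps_single]
      simp
    rw [h2, sumd a x ha]
    ring
  · intro k hk
    rintro ⟨hk1, hk2⟩
    rw [spB_snd] at hk2
    obtain ⟨u, rfl⟩ : ∃ u, k = 1 + u := ⟨k - 1, by omega⟩
    rw [ps_tauX_mid a x ha] at hk2
    have hu : u ≤ J a x := by omega
    have h3 : ps (dL a x ++ ([-1] ++ (ML a x).map (fun z => -z))) u = ps (dL a x) u := by
      rw [ps_append]
      have : u - (dL a x).length = 0 := by rw [lend a x ha]; omega
      rw [this, ps_zero, add_zero]
    rw [h3, psd a x] at hk2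
    have h4 := dyck_nn x.2.1 (min u (J a x))
    omega

lemma dB_spB : dB a ha (spB a x ha) = dL a x := by
  unfold dB
  rw [rN_spB a x ha, spB_snd]
  have h0 : J a x + 2 - 1 = 1 + J a x := by omega
  rw [h0, tauX]
  have h1 : ([1] ++ (dL a x ++ ([-1] ++ (ML a x).map (fun z => -z)))).take (1 + J a x)
      = [1] ++ (dL a x ++ ([-1] ++ (ML a x).map (fun z => -z))).take (J a x) := by
    have := List.take_length_add_append (l₁ := [(1:ℤ)])
      (l₂ := dL a x ++ ([-1] ++ (ML a x).map (fun z => -z))) (J a x)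
    simpa using this
  rw [h1]
  have h2 : (dL a x ++ ([-1] ++ (ML a x).map (fun z => -z))).take (J a x) = dL a x := by
    have h3 := List.take_length_add_append (l₁ := dL a x)
      (l₂ := [-1] ++ (ML a x).map (fun z => -z)) 0
    rw [lend a x ha] at h3
    simpa using h3
  rw [h2]
  rfl

lemma muB_spB : muB a ha (spB a x ha) = (ML a x).map (fun z => -z) := by
  unfold muB
  rw [rN_spB a x ha, spB_snd, tauX]
  have h0 : J a x + 2 = 1 + (J a x + 1) := by omega
  rw [h0]
  have h1 := List.drop_length_add_append (l₁ := [(1:ℤ)])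
    (l₂ := dL a x ++ ([-1] ++ (ML a x).map (fun z => -z))) (J a x + 1)
  simp only [List.length_singleton] at h1
  rw [h1]
  have h2 : J a x + 1 = (dL a x).length + 1 := by rw [lend a x ha]
  rw [h2, List.drop_length_add_append]
  rfl

lemma AB_spB : AB a ha (spB a x ha) = AL a x := by
  unfold AB
  rw [sN_spB a x ha, spB_fst, sigX, List.take_left]

lemma BB_spB : BB a ha (spB a x ha) = BL a x := by
  unfold BB
  rw [sN_spB a x ha, spB_fst, sigX, List.drop_left]

lemma asm_spB : asmL a ha (spB a x ha) = x.1 := by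
  rw [asmL, dB_spB a x ha, muB_spB a x ha, AB_spB a x ha, BB_spB a x ha]
  have h1 : ((ML a x).map (fun z => -z)).map (fun z => -z) = ML a x := by simp
  rw [h1]
  exact (pi_surgery a x ha).symm

lemma left_inv_core : asmA a ha (spB a x ha) = x :=
  Subtype.ext (asm_spB a x ha)

end RT1



section RT2
variable (a : ℕ) (ha : 1 ≤ a) (y : SideB a)
include ha
set_option linter.unusedSectionVars false

lemma asmA_fst : (asmA a ha y).1 = asmL a ha y := rfl

lemma MgSum : ((muB a ha y).map (fun z => -z)).sum = 0 := by
  rw [← ps_length, List.length_map, ps_map_neg, ps_length, summuB a ha y]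
  ring

lemma psasm_low : ∀ t, t ≤ (dB a ha y).length →
    ps (asmL a ha y) t = ps (dB a ha y) t := by
  intro t ht
  rw [asmL, ps_append]
  have h : t - (dB a ha y).length = 0 := by omega
  rw [h, ps_zero, add_zero]

lemma psasm_mid : ∀ u, ps (asmL a ha y) ((dB a ha y).length + (1 + u)) =
    1 + ps (AB a ha y ++ ((muB a ha y).map (fun z => -z) ++ ([-1] ++ BB a ha y))) u := by
  intro u
  rw [asmL, ps_append_add, sumdB a ha y]
  have h := ps_append_add [(1:ℤ)]
    (AB a ha y ++ ((muB a ha y).map (fun z => -z) ++ ([-1] ++ BB a ha y))) u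
  simp only [List.length_singleton, List.sum_cons, List.sum_nil, add_zero] at h
  rw [h]
  ring

lemma psasm_A : ∀ u, u ≤ (AB a ha y).length →
    ps (asmL a ha y) ((dB a ha y).length + (1 + u)) = 1 + ps y.1.1 (min u (sN a ha y)) := by
  intro u hu
  rw [psasm_mid a ha y, ps_append]
  have h : u - (AB a ha y).length = 0 := by omega
  rw [h, ps_zero, add_zero, psAB a ha y]

lemma psasm_M : ∀ v, ps (asmL a ha y) ((dB a ha y).length + (1 + ((AB a ha y).length + v))) =
    (a:ℤ) + ps ((muB a ha y).map (fun z => -z) ++ ([-1] ++ BB a ha y)) v := by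
  intro v
  rw [psasm_mid a ha y, ps_append_add, sumAB a ha y]
  ring

lemma psasm_B : ∀ w, ps (asmL a ha y)
    ((dB a ha y).length + (1 + ((AB a ha y).length + (((muB a ha y).map (fun z => -z)).length + (1 + w))))) =
    ps y.1.1 (sN a ha y + w) := by
  intro w
  rw [psasm_M a ha y, ps_append_add, MgSum a ha y]
  have h := ps_append_add [(-1:ℤ)] (BB a ha y) w
  simp only [List.length_singleton, List.sum_cons, List.sum_nil, add_zero] at h
  rw [h, psBB a ha y]
  ring

lemma hlen_asm : (asmL a ha y).length =
    (dB a ha y).length + (1 + ((AB a ha y).length + (((muB a ha y).map (fun z => -z)).length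
      + (1 + (BB a ha y).length)))) := by
  simp [asmL]
  omega

lemma I_asm : I a (asmA a ha y) = (dB a ha y).length + (1 + (AB a ha y).length) := by
  unfold I
  rw [Nat.find_eq_iff]
  constructor
  · show ps (asmL a ha y) _ = (a:ℤ)
    rw [psasm_A a ha y ((AB a ha y).length) le_rfl, lenAB a ha y, min_self, gS0 a ha y]
    ring
  · intro t ht
    show ¬ ps (asmL a ha y) t = (a:ℤ)
    rcases le_or_gt t ((dB a ha y).length) with h | h
    · rw [psasm_low a ha y t h, psdB a ha y]
      have := gTle a ha y (min (1 + t) (rN a ha y - 1))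
      omega
    · obtain ⟨u, rfl⟩ : ∃ u, t = (dB a ha y).length + (1 + u) := ⟨t - (dB a ha y).length - 1, by omega⟩
      have hu : u < (AB a ha y).length := by omega
      rw [psasm_A a ha y u (le_of_lt hu)]
      have hu2 : u < sN a ha y := by rw [lenAB a ha y] at hu; exact hu
      have h3 : min u (sN a ha y) = u := by omega
      rw [h3]
      have h4 := gSmin a ha y u hu2
      omega

lemma J_asm : J a (asmA a ha y) = (dB a ha y).length := by
  unfold J
  rw [I_asm a ha y, Nat.findGreatest_eq_iff]
  refine ⟨by omega, fun _ => ?_, fun t ht1 ht2 => ?_⟩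
  · show ps (asmL a ha y) _ = 0
    rw [psasm_low a ha y _ le_rfl, ps_length, sumdB a ha y]
  · show ¬ ps (asmL a ha y) t = 0
    obtain ⟨u, rfl⟩ : ∃ u, t = (dB a ha y).length + (1 + u) := ⟨t - (dB a ha y).length - 1, by omega⟩
    have hu : u ≤ (AB a ha y).length := by omega
    rw [psasm_A a ha y u hu]
    have := dyck_nn y.2.1 (min u (sN a ha y))
    omega

lemma K_asm : K a (asmA a ha y) =
    (dB a ha y).length + (1 + ((AB a ha y).length + ((muB a ha y).map (fun z => -z)).length)) := by
  unfold K
  rw [Nat.findGreatest_eq_iff]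
  have hl := hlen_asm a ha y
  refine ⟨by rw [asmA_fst, hl]; omega, fun _ => ?_, fun t ht1 ht2 => ?_⟩
  · show ps (asmL a ha y) _ = (a:ℤ)
    have h := psasm_M a ha y (((muB a ha y).map (fun z => -z)).length)
    rw [h]
    have h2 := ps_append_add ((muB a ha y).map (fun z => -z)) ([-1] ++ BB a ha y) 0
    simp only [ps_zero, add_zero, Nat.add_zero] at h2
    rw [h2, MgSum a ha y]
    ring
  · show ¬ ps (asmL a ha y) t = (a:ℤ)
    rw [asmA_fst, hl] at ht2
    obtain ⟨w, rfl⟩ : ∃ w, t = (dB a ha y).length +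
        (1 + ((AB a ha y).length + (((muB a ha y).map (fun z => -z)).length + (1 + w)))) :=
      ⟨t - (dB a ha y).length - 1 - (AB a ha y).length - ((muB a ha y).map (fun z => -z)).length - 1,
        by omega⟩
    rw [psasm_B a ha y w]
    have := gSle a ha y (sN a ha y + w)
    omega

lemma dL_asm : dL a (asmA a ha y) = dB a ha y := by
  unfold dL
  rw [J_asm a ha y, asmA_fst, asmL]
  exact List.take_left

lemma take_I_asm : (asmL a ha y).take ((dB a ha y).length + (1 + (AB a ha y).length)) =
    dB a ha y ++ ([1] ++ AB a ha y) := by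
  rw [asmL, List.take_length_add_append]
  congr 1
  have h1 := List.take_length_add_append (l₁ := [(1:ℤ)])
    (l₂ := AB a ha y ++ ((muB a ha y).map (fun z => -z) ++ ([-1] ++ BB a ha y))) ((AB a ha y).length)
  simp only [List.length_singleton] at h1
  rw [h1]
  congr 1
  have h2 := List.take_length_add_append (l₁ := AB a ha y)
    (l₂ := (muB a ha y).map (fun z => -z) ++ ([-1] ++ BB a ha y)) 0
  simpa using h2

lemma AL_asm : AL a (asmA a ha y) = AB a ha y := by
  unfold AL
  rw [I_asm a ha y, J_asm a ha y, asmA_fst, take_I_asm a ha y]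
  have h := List.drop_length_add_append (l₁ := dB a ha y) (l₂ := [1] ++ AB a ha y) 1
  rw [h]
  rfl

lemma take_K_asm : (asmL a ha y).take
    ((dB a ha y).length + (1 + ((AB a ha y).length + ((muB a ha y).map (fun z => -z)).length))) =
    dB a ha y ++ ([1] ++ (AB a ha y ++ (muB a ha y).map (fun z => -z))) := by
  rw [asmL, List.take_length_add_append]
  congr 1
  have h1 := List.take_length_add_append (l₁ := [(1:ℤ)])
    (l₂ := AB a ha y ++ ((muB a ha y).map (fun z => -z) ++ ([-1] ++ BB a ha y)))
    ((AB a ha y).length + ((muB a ha y).map (fun z => -z)).length)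
  simp only [List.length_singleton] at h1
  rw [h1]
  congr 1
  rw [List.take_length_add_append]
  congr 1
  have h2 := List.take_length_add_append (l₁ := (muB a ha y).map (fun z => -z))
    (l₂ := [-1] ++ BB a ha y) 0
  simpa using h2

lemma ML_asm : ML a (asmA a ha y) = (muB a ha y).map (fun z => -z) := by
  unfold ML
  rw [I_asm a ha y, K_asm a ha y, asmA_fst, take_K_asm a ha y]
  have h := List.drop_length_add_append (l₁ := dB a ha y)
    (l₂ := [1] ++ (AB a ha y ++ (muB a ha y).map (fun z => -z))) (1 + (AB a ha y).length)
  rw [h]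
  have h1 := List.drop_length_add_append (l₁ := [(1:ℤ)])
    (l₂ := AB a ha y ++ (muB a ha y).map (fun z => -z)) ((AB a ha y).length)
  simp only [List.length_singleton] at h1
  rw [h1]
  exact List.drop_left

lemma BL_asm : BL a (asmA a ha y) = BB a ha y := by
  unfold BL
  rw [K_asm a ha y, asmA_fst, asmL]
  have e : (dB a ha y).length + (1 + ((AB a ha y).length + ((muB a ha y).map (fun z => -z)).length)) + 1
      = (dB a ha y).length + (1 + ((AB a ha y).length + (((muB a ha y).map (fun z => -z)).length + 1))) := by
    omega
  rw [e, List.drop_length_add_append]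
  have h1 := List.drop_length_add_append (l₁ := [(1:ℤ)])
    (l₂ := AB a ha y ++ ((muB a ha y).map (fun z => -z) ++ ([-1] ++ BB a ha y)))
    ((AB a ha y).length + (((muB a ha y).map (fun z => -z)).length + 1))
  simp only [List.length_singleton] at h1
  rw [h1, List.drop_length_add_append]
  have h2 := List.drop_length_add_append (l₁ := (muB a ha y).map (fun z => -z))
    (l₂ := [-1] ++ BB a ha y) 1
  rw [h2]
  rfl

lemma sig_asm : sigX a (asmA a ha y) = y.1.1 := by
  rw [sigX, AL_asm a ha y, BL_asm a ha y, AB, BB, List.take_append_drop]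

lemma tau_asm : tauX a (asmA a ha y) = y.1.2 := by
  rw [tauX, dL_asm a ha y, ML_asm a ha y]
  have h1 : ((muB a ha y).map (fun z => -z)).map (fun z => -z) = muB a ha y := by simp
  rw [h1]
  exact (tau_surgery a ha y).symm

lemma right_inv_core : spB a (asmA a ha y) ha = y := by
  apply Subtype.ext
  exact Prod.ext (sig_asm a ha y) (tau_asm a ha y)

end RT2

noncomputable def coreEquiv (a : ℕ) (ha : 1 ≤ a) : SideA a ≃ SideB a where
  toFun x := spB a x ha
  invFun y := asmA a ha y
  left_inv x := left_inv_core a x ha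
  right_inv y := right_inv_core a ha y

lemma coreEquiv_len (a : ℕ) (ha : 1 ≤ a) (x : SideA a) :
    ((coreEquiv a ha x).1.1).length + ((coreEquiv a ha x).1.2).length = x.1.length :=
  len_sigX_tauX a x ha



section Tuple

def TS (n : ℤ) (m : ℕ) (F : Fin m → ℕ) : Type :=
  {p : Fin m → List ℤ //
    (∀ i, IsDyckPath (p i)) ∧
    (∑ i, ((p i).length : ℤ)) = 2 * n ∧
    ∀ i, pathHeight (p i) = F i}

lemma P_eq_TS (n : ℤ) (a : List ℕ) : P n a = Nat.card (TS n a.length (fun i => a.get i)) := rfl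

lemma steps_bool (l : List ℤ) (h : ∀ s ∈ l, s = 1 ∨ s = -1) :
    (l.map (fun z => decide (z = 1))).map (fun b => if b then (1:ℤ) else -1) = l := by
  induction l with
  | nil => simp
  | cons a t ih =>
    rcases h a (by simp) with h1 | h1 <;>
      simp [h1, ih (fun s hs => h s (by simp [hs]))]

instance finTS (n : ℤ) (m : ℕ) (F : Fin m → ℕ) : Finite (TS n m F) := by
  classical
  set N := (2 * n).toNat with hN
  have hfin : Finite {l : List Bool // l.length ≤ N} := List.finite_length_le Bool N
  have hb : ∀ (p : TS n m F) (i : Fin m), ((p.1 i).map (fun z => decide (z = 1))).length ≤ N := by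
    intro p i
    rw [List.length_map]
    have h1 : ((p.1 i).length : ℤ) ≤ ∑ j, ((p.1 j).length : ℤ) := by
      apply Finset.single_le_sum (f := fun j => ((p.1 j).length : ℤ))
      · intro j _
        positivity
      · exact Finset.mem_univ i
    rw [p.2.2.1] at h1
    omega
  apply Finite.of_injective
    (f := fun p : TS n m F => fun i => (⟨(p.1 i).map (fun z => decide (z = 1)), hb p i⟩ :
      {l : List Bool // l.length ≤ N}))
  intro p q h
  apply Subtype.ext
  funext i
  have h1 : (p.1 i).map (fun z => decide (z = 1)) = (q.1 i).map (fun z => decide (z = 1)) :=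
    congrArg Subtype.val (congrFun h i)
  have h2 := steps_bool (p.1 i) (p.2.1 i).1
  have h3 := steps_bool (q.1 i) (q.2.1 i).1
  rw [← h2, ← h3, h1]

lemma card_sigma' {ι : Type} [Fintype ι] (B : ι → Type) [∀ i, Finite (B i)] :
    Nat.card ((i : ι) × B i) = ∑ i, Nat.card (B i) := by
  letI : ∀ i, Fintype (B i) := fun i => Fintype.ofFinite _
  rw [Nat.card_eq_fintype_card, Fintype.card_sigma]
  exact Finset.sum_congr rfl (fun i _ => (Nat.card_eq_fintype_card).symm)

variable (n : ℤ) (m : ℕ) (F : Fin (m+1) → ℕ) (ham : 1 ≤ F (Fin.last m))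

def Gf (y : ℕ) : Fin (m+2) → ℕ :=
  Fin.snoc (Fin.snoc (fun i => F i.castSucc) (F (Fin.last m) - 1)) y

lemma Gf_last (y : ℕ) : Gf m F y (Fin.last (m+1)) = y := by
  simp [Gf]

lemma Gf_mid (y : ℕ) : Gf m F y (Fin.castSucc (Fin.last m)) = F (Fin.last m) - 1 := by
  simp [Gf]

lemma Gf_low (y : ℕ) (j : Fin m) : Gf m F y j.castSucc.castSucc = F j.castSucc := by
  simp [Gf]

def xOf (p : TS n (m+1) F) : SideA (F (Fin.last m)) :=
  ⟨p.1 (Fin.last m), p.2.1 _, p.2.2.2 _⟩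

noncomputable def tupTo (p : TS n (m+1) F) :
    Σ y : ↥(Finset.Icc 1 (F (Fin.last m))), TS n (m+2) (Gf m F y.1) :=
  ⟨⟨pathHeight (coreEquiv _ ham (xOf n m F p)).1.2,
    Finset.mem_Icc.mpr ⟨(coreEquiv _ ham (xOf n m F p)).2.2.2.2.1,
      (coreEquiv _ ham (xOf n m F p)).2.2.2.2.2⟩⟩,
   ⟨Fin.snoc (Fin.snoc (fun i => p.1 i.castSucc) (coreEquiv _ ham (xOf n m F p)).1.1)
      (coreEquiv _ ham (xOf n m F p)).1.2, by
    refine ⟨?_, ?_, ?_⟩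
    · intro i
      refine Fin.lastCases ?_ (fun j => ?_) i
      · rw [Fin.snoc_last]
        exact (coreEquiv _ ham (xOf n m F p)).2.2.1
      · rw [Fin.snoc_castSucc]
        refine Fin.lastCases ?_ (fun j2 => ?_) j
        · rw [Fin.snoc_last]
          exact (coreEquiv _ ham (xOf n m F p)).2.1
        · rw [Fin.snoc_castSucc]
          exact p.2.1 _
    · rw [Fin.sum_univ_castSucc, Fin.sum_univ_castSucc]
      simp only [Fin.snoc_castSucc, Fin.snoc_last]
      have hlen := coreEquiv_len (F (Fin.last m)) ham (xOf n m F p)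
      have hx : (xOf n m F p).1 = p.1 (Fin.last m) := rfl
      rw [hx] at hlen
      have hsum := p.2.2.1
      rw [Fin.sum_univ_castSucc] at hsum
      push_cast at hsum hlen ⊢
      omega
    · intro i
      refine Fin.lastCases ?_ (fun j => ?_) i
      · simp only [Fin.snoc_last, Gf_last]
      · rw [Fin.snoc_castSucc]
        refine Fin.lastCases ?_ (fun j2 => ?_) j
        · simp only [Fin.snoc_last, Gf_mid]
          exact (coreEquiv _ ham (xOf n m F p)).2.2.2.1
        · simp only [Fin.snoc_castSucc, Gf_low]
          exact p.2.2.2 _⟩⟩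

lemma tupTo_fst (p : TS n (m+1) F) :
    ((tupTo n m F ham p).1 : ℕ) = pathHeight (coreEquiv _ ham (xOf n m F p)).1.2 := rfl

lemma tupTo_val (p : TS n (m+1) F) :
    (tupTo n m F ham p).2.1 =
      Fin.snoc (Fin.snoc (fun i => p.1 i.castSucc) (coreEquiv _ ham (xOf n m F p)).1.1)
        (coreEquiv _ ham (xOf n m F p)).1.2 := rfl

def yOf (z : Σ y : ↥(Finset.Icc 1 (F (Fin.last m))), TS n (m+2) (Gf m F y.1)) :
    SideB (F (Fin.last m)) :=
  ⟨(z.2.1 (Fin.castSucc (Fin.last m)), z.2.1 (Fin.last (m+1))),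
    z.2.2.1 _, z.2.2.1 _,
    by
      have h := z.2.2.2.2 (Fin.castSucc (Fin.last m))
      rw [Gf_mid] at h
      exact h,
    by
      have h := z.2.2.2.2 (Fin.last (m+1))
      rw [Gf_last] at h
      rw [h]
      exact (Finset.mem_Icc.mp z.1.2).1,
    by
      have h := z.2.2.2.2 (Fin.last (m+1))
      rw [Gf_last] at h
      rw [h]
      exact (Finset.mem_Icc.mp z.1.2).2⟩

noncomputable def tupInv (z : Σ y : ↥(Finset.Icc 1 (F (Fin.last m))), TS n (m+2) (Gf m F y.1)) :
    TS n (m+1) F :=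
  ⟨Fin.snoc (fun i => z.2.1 i.castSucc.castSucc) (asmA _ ham (yOf n m F z)).1, by
    refine ⟨?_, ?_, ?_⟩
    · intro i
      refine Fin.lastCases ?_ (fun j => ?_) i
      · rw [Fin.snoc_last]
        exact (asmA _ ham (yOf n m F z)).2.1
      · rw [Fin.snoc_castSucc]
        exact z.2.2.1 _
    · rw [Fin.sum_univ_castSucc]
      simp only [Fin.snoc_castSucc, Fin.snoc_last]
      have hlen : ((asmA _ ham (yOf n m F z)).1).length =
          (z.2.1 (Fin.castSucc (Fin.last m))).length + (z.2.1 (Fin.last (m+1))).length :=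
        len_asmL _ ham (yOf n m F z)
      have hsum := z.2.2.2.1
      rw [Fin.sum_univ_castSucc, Fin.sum_univ_castSucc] at hsum
      push_cast at hsum hlen ⊢
      omega
    · intro i
      refine Fin.lastCases ?_ (fun j => ?_) i
      · rw [Fin.snoc_last]
        exact (asmA _ ham (yOf n m F z)).2.2
      · rw [Fin.snoc_castSucc]
        have h := z.2.2.2.2 (Fin.castSucc (Fin.castSucc j))
        rw [Gf_low] at h
        exact h⟩

lemma tupInv_val (z : Σ y : ↥(Finset.Icc 1 (F (Fin.last m))), TS n (m+2) (Gf m F y.1)) :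
    (tupInv n m F ham z).1 =
      Fin.snoc (fun i => z.2.1 i.castSucc.castSucc) (asmA _ ham (yOf n m F z)).1 := rfl

lemma tup_left_inv (p : TS n (m+1) F) : tupInv n m F ham (tupTo n m F ham p) = p := by
  have hy : yOf n m F (tupTo n m F ham p) = coreEquiv _ ham (xOf n m F p) := by
    apply Subtype.ext
    apply Prod.ext
    · show (tupTo n m F ham p).2.1 (Fin.castSucc (Fin.last m)) = _
      rw [tupTo_val, Fin.snoc_castSucc, Fin.snoc_last]
    · show (tupTo n m F ham p).2.1 (Fin.last (m+1)) = _
      rw [tupTo_val, Fin.snoc_last]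
  apply Subtype.ext
  rw [tupInv_val]
  funext i
  refine Fin.lastCases ?_ (fun j => ?_) i
  · rw [Fin.snoc_last, hy]
    have h1 : coreEquiv _ ham (xOf n m F p) = spB _ (xOf n m F p) ham := rfl
    rw [h1, left_inv_core _ (xOf n m F p) ham]
    rfl
  · rw [Fin.snoc_castSucc]
    show (tupTo n m F ham p).2.1 j.castSucc.castSucc = _
    rw [tupTo_val, Fin.snoc_castSucc, Fin.snoc_castSucc]

lemma tup_right_inv (z : Σ y : ↥(Finset.Icc 1 (F (Fin.last m))), TS n (m+2) (Gf m F y.1)) :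
    tupTo n m F ham (tupInv n m F ham z) = z := by
  obtain ⟨y, q⟩ := z
  have hx : xOf n m F (tupInv n m F ham ⟨y, q⟩) = asmA _ ham (yOf n m F ⟨y, q⟩) := by
    apply Subtype.ext
    show (tupInv n m F ham ⟨y, q⟩).1 (Fin.last m) = _
    rw [tupInv_val, Fin.snoc_last]
  have hcore : coreEquiv _ ham (xOf n m F (tupInv n m F ham ⟨y, q⟩)) = yOf n m F ⟨y, q⟩ := by
    have h1 : coreEquiv _ ham (xOf n m F (tupInv n m F ham ⟨y, q⟩))
        = spB _ (xOf n m F (tupInv n m F ham ⟨y, q⟩)) ham := rfl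
    rw [h1, hx]
    exact right_inv_core _ ham (yOf n m F ⟨y, q⟩)
  have hy1 : (tupTo n m F ham (tupInv n m F ham ⟨y, q⟩)).1 = y := by
    apply Subtype.ext
    rw [tupTo_fst, hcore]
    have h := q.2.2.2 (Fin.last (m+1))
    rw [Gf_last] at h
    exact h
  have hq : (tupTo n m F ham (tupInv n m F ham ⟨y, q⟩)).2.1 = q.1 := by
    rw [tupTo_val]
    funext i
    refine Fin.lastCases ?_ (fun j => ?_) i
    · rw [Fin.snoc_last, hcore]
      rfl
    · rw [Fin.snoc_castSucc]
      refine Fin.lastCases ?_ (fun j2 => ?_) j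
      · rw [Fin.snoc_last, hcore]
        rfl
      · rw [Fin.snoc_castSucc]
        show (tupInv n m F ham ⟨y, q⟩).1 j2.castSucc = _
        rw [tupInv_val, Fin.snoc_castSucc]
  rcases hw : tupTo n m F ham (tupInv n m F ham ⟨y, q⟩) with ⟨y1, q1⟩
  rw [hw] at hy1 hq
  subst hy1
  exact congrArg (Sigma.mk y1) (Subtype.ext hq)

noncomputable def tupEquiv : TS n (m+1) F ≃
    Σ y : ↥(Finset.Icc 1 (F (Fin.last m))), TS n (m+2) (Gf m F y.1) where
  toFun := tupTo n m F ham
  invFun := tupInv n m F ham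
  left_inv := tup_left_inv n m F ham
  right_inv := tup_right_inv n m F ham

include ham in
lemma card_split : Nat.card (TS n (m+1) F) =
    ∑ y ∈ Finset.Icc 1 (F (Fin.last m)), Nat.card (TS n (m+2) (Gf m F y)) := by
  rw [Nat.card_congr (tupEquiv n m F ham)]
  rw [card_sigma' (fun y : ↥(Finset.Icc 1 (F (Fin.last m))) => TS n (m+2) (Gf m F y.1))]
  exact Finset.sum_coe_sort (Finset.Icc 1 (F (Fin.last m)))
    (fun y => Nat.card (TS n (m+2) (Gf m F y)))

end Tuple


lemma card_TS_reindex (n : ℤ) {m₁ m₂ : ℕ} (h : m₁ = m₂) (F₁ : Fin m₁ → ℕ) :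
    Nat.card (TS n m₁ F₁) = Nat.card (TS n m₂ (fun j => F₁ (Fin.cast h.symm j))) := by
  subst h
  rfl

end DyckAux


open DyckAux in
/-- For `n ≥ 0`, nonnegative integers `a₁,…,a_{m-1}` (the list `l`) and `aₘ ≥ 1`,
`P_n(a₁,…,a_{m-1},aₘ) = ∑_{y=1}^{aₘ} P_n(a₁,…,a_{m-1}, aₘ−1, y)`. -/
theorem path_height_splitter (n : ℕ) (l : List ℕ) (am : ℕ) (ham : 1 ≤ am) :
    P (n : ℤ) (l ++ [am]) = ∑ y ∈ Finset.Icc 1 am, P (n : ℤ) (l ++ [am - 1, y]) := by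
  set m := l.length with hm
  have hlen1 : (l ++ [am]).length = m + 1 := by simp [hm]
  rw [P_eq_TS, card_TS_reindex _ hlen1]
  set F : Fin (m+1) → ℕ := fun j => (l ++ [am]).get (Fin.cast hlen1.symm j) with hFdef
  have hFlast : F (Fin.last m) = am := by
    show (l ++ [am]).get _ = am
    rw [List.get_eq_getElem]
    have hv : ((Fin.cast hlen1.symm (Fin.last m)) : ℕ) = m := rfl
    simp only [hv]
    rw [List.getElem_append_right (by omega)]
    simp [hm]
  have hamF : 1 ≤ F (Fin.last m) := by rw [hFlast]; exact ham
  rw [card_split (n : ℤ) m F hamF, hFlast]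
  apply Finset.sum_congr rfl
  intro y hy
  have hlen2 : (l ++ [am - 1, y]).length = m + 2 := by simp [hm]
  rw [P_eq_TS, card_TS_reindex _ hlen2]
  have hfun : (fun j => (l ++ [am - 1, y]).get (Fin.cast hlen2.symm j)) = Gf m F y := by
    funext j
    refine Fin.lastCases ?_ (fun j1 => ?_) j
    · rw [Gf_last, List.get_eq_getElem]
      have hv : ((Fin.cast hlen2.symm (Fin.last (m+1))) : ℕ) = m + 1 := rfl
      simp only [hv]
      rw [List.getElem_append_right (by omega)]
      simp [hm]
    · refine Fin.lastCases ?_ (fun j2 => ?_) j1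
      · rw [Gf_mid, hFlast, List.get_eq_getElem]
        have hv : ((Fin.cast hlen2.symm (Fin.castSucc (Fin.last m))) : ℕ) = m := rfl
        simp only [hv]
        rw [List.getElem_append_right (by omega)]
        simp [hm]
      · rw [Gf_low, List.get_eq_getElem]
        have hv : ((Fin.cast hlen2.symm (Fin.castSucc (Fin.castSucc j2))) : ℕ) = (j2 : ℕ) := rfl
        simp only [hv]
        rw [List.getElem_append_left (by exact j2.isLt)]
        show _ = F (Fin.castSucc j2)
        rw [hFdef]
        simp only [List.get_eq_getElem]
        have hv2 : ((Fin.cast hlen1.symm (Fin.castSucc j2)) : ℕ) = (j2 : ℕ) := rfl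
        simp only [hv2]
        rw [List.getElem_append_left (by exact j2.isLt)]
  rw [hfun]
end

section
/- Let n ≥ 1, x ≥ 0, let (a_0,…,a_k) be nonnegative integers, and fix an index i with 1 ≤ i ≤ k and a_i ≥ 1 (when i = k, interpret references to a_{k+1} by extending the tuple with a_{k+1} = 0). Then Q_n^{(x)}(a_0,…,a_k) = 2·Q_{n-1}^{(x)}(a_0,…,a_k) + Q_{n-1}^{(x)}(…, a_{i-1} + 1, a_i − 1, …) + Q_{n-1}^{(x)}(…, a_i − 1, a_{i+1} + 1, …) − Q_{n-1}^{(x)}(…, a_{i-1} + 1, a_i, …) − Q_{n-1}^{(x)}(…, a_i + 1, …) − Q_{n-1}^{(x)}(…, a_i, a_{i+1} + 1, …), where in each term only the indicated entries of the tuple are changed. -/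
namespace DyckProofAux


/-- partial sum -/
def ps (p : List ℤ) (k : ℕ) : ℤ := (p.take k).sum

lemma ps_zero (p : List ℤ) : ps p 0 = 0 := rfl

lemma ps_of_le (p : List ℤ) {k : ℕ} (h : p.length ≤ k) : ps p k = p.sum := by
  simp [ps, List.take_of_length_le h]

lemma ps_cons (a : ℤ) (p : List ℤ) (k : ℕ) : ps (a :: p) (k+1) = a + ps p k := by
  simp [ps]

lemma ps_append (u v : List ℤ) (k : ℕ) :
    ps (u ++ v) k = ps u k + ps v (k - u.length) := by
  simp [ps, List.take_append]

lemma ps_drop (p : List ℤ) (a k : ℕ) : ps (p.drop a) k = ps p (a + k) - ps p a := by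
  have : ps p (a + k) = ps p a + ps (p.drop a) k := by
    simp [ps, List.take_add]
  omega

lemma ps_succ (p : List ℤ) (k : ℕ) (h : k < p.length) :
    ps p (k+1) = ps p k + p.get ⟨k, h⟩ := by
  have h2 : p.take (k+1) = p.take k ++ [p.get ⟨k, h⟩] := by
    rw [List.take_succ, List.getElem?_eq_getElem h]
    simp [List.get_eq_getElem]
  unfold ps
  rw [h2, List.sum_append, List.sum_singleton]

lemma pathHeight_le_iff {p : List ℤ} {h : ℕ} :
    pathHeight p ≤ h ↔ ∀ k, ps p k ≤ (h : ℤ) := by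
  unfold pathHeight
  rw [Finset.sup_le_iff]
  constructor
  · intro H k
    rcases le_or_gt k p.length with hk | hk
    · have := H k (Finset.mem_range.2 (by omega))
      rwa [Int.toNat_le] at this
    · rw [ps_of_le p (by omega), ← ps_of_le p (le_refl p.length)]
      have := H p.length (Finset.mem_range.2 (by omega))
      rwa [Int.toNat_le] at this
  · intro H k _
    rw [Int.toNat_le]; exact H k

lemma dyck_length_even {p : List ℤ} (hp : IsDyckPath p) : ∃ m, p.length = 2 * m := by
  have key : ∀ l : List ℤ, (∀ s ∈ l, s = 1 ∨ s = -1) → Even ((l.length : ℤ) + l.sum) := by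
    intro l hl
    induction l with
    | nil => simp
    | cons a t ih =>
      have ha := hl a (by simp)
      have ht := ih (fun s hs => hl s (by simp [hs]))
      have : ((a :: t).length : ℤ) + (a :: t).sum = ((t.length : ℤ) + t.sum) + (1 + a) := by
        simp; ring
      rw [this]
      rcases ha with h | h <;> rw [h] <;> exact ht.add (by norm_num)
  have := key p hp.1
  rw [hp.2.2, add_zero] at this
  rcases this with ⟨m, hm⟩
  refine ⟨m.toNat, ?_⟩; omega


/-! ### Finiteness -/

lemma signed_eq_of_pattern {l₁ l₂ : List ℤ} (h₁ : ∀ s ∈ l₁, s = 1 ∨ s = -1)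
    (h₂ : ∀ s ∈ l₂, s = 1 ∨ s = -1)
    (h : ∀ n : ℕ, l₁[n]?.map (fun s => decide (s = 1)) =
      l₂[n]?.map (fun s => decide (s = 1))) : l₁ = l₂ := by
  apply List.ext_getElem?
  intro n
  have hn := h n
  cases e₁ : l₁[n]? with
  | none => cases e₂ : l₂[n]? with
    | none => rfl
    | some s₂ => rw [e₁, e₂] at hn; simp at hn
  | some s₁ => cases e₂ : l₂[n]? with
    | none => rw [e₁, e₂] at hn; simp at hn
    | some s₂ =>
      rw [e₁, e₂] at hn
      simp only [Option.map_some, Option.some.injEq] at hn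
      have m₁ := h₁ s₁ (List.mem_of_getElem? e₁)
      have m₂ := h₂ s₂ (List.mem_of_getElem? e₂)
      rcases m₁ with rfl | rfl <;> rcases m₂ with rfl | rfl <;> simp_all

instance finite_bounded (N : ℕ) :
    Finite {l : List ℤ // (∀ s ∈ l, s = 1 ∨ s = -1) ∧ l.length ≤ N} := by
  apply Finite.of_injective
    (f := fun l => (fun i : Fin N => (l.val[(i : ℕ)]?).map (fun s => decide (s = 1))))
  rintro ⟨l₁, h₁, hl₁⟩ ⟨l₂, h₂, hl₂⟩ heq
  ext1
  apply signed_eq_of_pattern h₁ h₂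
  intro n
  rcases lt_or_ge n N with hn | hn
  · exact congrFun heq ⟨n, hn⟩
  · rw [List.getElem?_eq_none_iff.2 (by omega), List.getElem?_eq_none_iff.2 (by omega)]

/-! ### counting types -/

instance finite_single (n h : ℕ) :
    Finite {p : List ℤ // IsDyckPath p ∧ p.length = 2*n ∧ pathHeight p ≤ h} := by
  apply Finite.of_injective (f := fun p =>
    (⟨p.val, p.2.1.1, by omega⟩ : {l : List ℤ // (∀ s ∈ l, s = 1 ∨ s = -1) ∧ l.length ≤ 2*n}))
  rintro ⟨l₁, _⟩ ⟨l₂, _⟩ h; simpa using h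

instance finite_single_eq (n h : ℕ) :
    Finite {p : List ℤ // IsDyckPath p ∧ p.length = 2*n ∧ pathHeight p = h} := by
  apply Finite.of_injective (f := fun p =>
    (⟨p.val, p.2.1.1, by omega⟩ : {l : List ℤ // (∀ s ∈ l, s = 1 ∨ s = -1) ∧ l.length ≤ 2*n}))
  rintro ⟨l₁, _⟩ ⟨l₂, _⟩ h; simpa using h

noncomputable def cnt (n h : ℕ) : ℕ :=
  Nat.card {p : List ℤ // IsDyckPath p ∧ p.length = 2*n ∧ pathHeight p ≤ h}

noncomputable def fc (n h : ℕ) : ℕ :=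
  Nat.card {p : List ℤ // IsDyckPath p ∧ p.length = 2*n ∧ pathHeight p = h}

lemma cnt_zero_left (h : ℕ) : cnt 0 h = 1 := by
  rw [cnt, Nat.card_eq_one_iff_unique]
  constructor
  · constructor
    rintro ⟨l₁, hd₁, hl₁, _⟩ ⟨l₂, hd₂, hl₂, _⟩
    have : l₁ = [] := List.length_eq_zero_iff.1 (by omega)
    have : l₂ = [] := List.length_eq_zero_iff.1 (by omega)
    subst_vars; rfl
  · exact ⟨⟨[], ⟨by simp, by simp [ps_zero], by simp⟩, by simp, by rw [pathHeight_le_iff]; intro k; simp [ps]⟩⟩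

lemma height_zero {p : List ℤ} (hd : IsDyckPath p) (hh : pathHeight p ≤ 0) : p = [] := by
  cases p with
  | nil => rfl
  | cons a t =>
    exfalso
    have h1 := pathHeight_le_iff.1 hh 1
    have h2 := hd.2.1 1
    have := hd.1 a (by simp)
    rw [show ps (a :: t) 1 = a by simp [ps]] at h1
    rw [show ((a :: t).take 1) = [a] by rfl] at h2
    simp at h2
    omega


/-! ### glue and first-return decomposition -/

def glue (p q : List ℤ) : List ℤ := (1 :: p) ++ ((-1) :: q)

lemma glue_length (p q : List ℤ) : (glue p q).length = p.length + q.length + 2 := by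
  simp [glue]; omega

lemma glue_ps_low (p q : List ℤ) {k : ℕ} (hk : k ≤ p.length) :
    ps (glue p q) (k+1) = 1 + ps p k := by
  rw [glue, ps_append, ps_cons]
  have h1 : k + 1 - (1 :: p).length = 0 := by simp; omega
  rw [h1, ps_zero, add_zero]

lemma glue_ps_high (p q : List ℤ) (hp : p.sum = 0) (k : ℕ) :
    ps (glue p q) (p.length + 2 + k) = ps q k := by
  rw [glue, ps_append, show p.length + 2 + k = (p.length + 1 + k) + 1 by omega, ps_cons,
    ps_of_le p (by omega), hp,
    show p.length + 1 + k + 1 - (1 :: p).length = k + 1 by simp; omega, ps_cons]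
  ring

lemma glue_dyck {p q : List ℤ} (hp : IsDyckPath p) (hq : IsDyckPath q) :
    IsDyckPath (glue p q) := by
  obtain ⟨hp1, hp2, hp3⟩ := hp
  obtain ⟨hq1, hq2, hq3⟩ := hq
  refine ⟨?_, ?_, ?_⟩
  · intro s hs
    simp only [glue, List.mem_append, List.mem_cons] at hs
    rcases hs with (rfl | h) | (rfl | h)
    · left; rfl
    · exact hp1 s h
    · right; rfl
    · exact hq1 s h
  · intro k
    show 0 ≤ ps (glue p q) k
    cases k with
    | zero => rw [ps_zero]
    | succ m =>
      rcases le_or_gt m p.length with hm | hm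
      · rw [glue_ps_low p q hm]
        have h2 : 0 ≤ ps p m := hp2 m
        omega
      · rw [show m + 1 = p.length + 2 + (m - p.length - 1) by omega, glue_ps_high p q hp3]
        exact hq2 _
  · show (glue p q).sum = 0
    rw [glue, List.sum_append, List.sum_cons, List.sum_cons, hp3, hq3]
    ring

lemma glue_height_le {p q : List ℤ} {h : ℕ} (hp3 : p.sum = 0)
    (hhp : pathHeight p ≤ h) (hhq : pathHeight q ≤ h + 1) :
    pathHeight (glue p q) ≤ h + 1 := by
  rw [pathHeight_le_iff] at *
  intro k
  cases k with
  | zero => rw [ps_zero]; positivity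
  | succ m =>
    rcases le_or_gt m p.length with hm | hm
    · rw [glue_ps_low p q hm]
      have := hhp m
      push_cast
      omega
    · rw [show m + 1 = p.length + 2 + (m - p.length - 1) by omega, glue_ps_high p q hp3]
      exact hhq _

lemma glue_height_p {p q : List ℤ} {h : ℕ} (hg : pathHeight (glue p q) ≤ h + 1)
    (hp : ∀ k, 0 ≤ ps p k) : pathHeight p ≤ h := by
  rw [pathHeight_le_iff] at *
  intro k
  rcases le_or_gt k p.length with hk | hk
  · have := hg (k+1)
    rw [glue_ps_low p q hk] at this
    push_cast at *
    omega
  · rw [ps_of_le p (by omega), ← ps_of_le p (le_refl p.length)]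
    have := hg (p.length+1)
    rw [glue_ps_low p q (le_refl _)] at this
    push_cast at *
    omega

lemma glue_height_q {p q : List ℤ} {h : ℕ} (hp3 : p.sum = 0)
    (hg : pathHeight (glue p q) ≤ h + 1) : pathHeight q ≤ h + 1 := by
  rw [pathHeight_le_iff] at *
  intro k
  have := hg (p.length + 2 + k)
  rwa [glue_ps_high p q hp3] at this

lemma glue_no_lt {p₁ q₁ p₂ q₂ : List ℤ} (hs₁ : p₁.sum = 0)
    (hp₂ : ∀ k, 0 ≤ ps p₂ k)
    (heq : p₁ ++ (-1) :: q₁ = p₂ ++ (-1) :: q₂) (hlt : p₁.length < p₂.length) : False := by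
  have h1 : ps (p₁ ++ (-1) :: q₁) (p₁.length + 1) = -1 := by
    rw [ps_append, ps_of_le p₁ (by omega), hs₁,
      show p₁.length + 1 - p₁.length = 1 by omega,
      show (1:ℕ) = 0 + 1 by rfl, ps_cons, ps_zero]
    ring
  have h2 : ps (p₂ ++ (-1) :: q₂) (p₁.length + 1) = ps p₂ (p₁.length + 1) := by
    rw [ps_append, show p₁.length + 1 - p₂.length = 0 by omega, ps_zero, add_zero]
  rw [heq, h2] at h1
  have := hp₂ (p₁.length + 1)
  omega

lemma glue_inj {p₁ q₁ p₂ q₂ : List ℤ} (hp₁ : IsDyckPath p₁) (hp₂ : IsDyckPath p₂)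
    (h : glue p₁ q₁ = glue p₂ q₂) : p₁ = p₂ ∧ q₁ = q₂ := by
  have h' : p₁ ++ (-1) :: q₁ = p₂ ++ (-1) :: q₂ := by
    have := h
    simp only [glue, List.cons_append] at this
    exact List.cons_injective this
  have hlen : p₁.length = p₂.length := by
    rcases lt_trichotomy p₁.length p₂.length with hl | hl | hl
    · exact absurd (glue_no_lt hp₁.2.2 (fun k => hp₂.2.1 k) h' hl) (by simp)
    · exact hl
    · exact absurd (glue_no_lt hp₂.2.2 (fun k => hp₁.2.1 k) h'.symm hl) (by simp)
  obtain ⟨e1, e2⟩ := List.append_inj h' hlen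
  exact ⟨e1, by simpa using e2⟩


lemma dyck_decomp {r : List ℤ} (hd : IsDyckPath r) (hne : r ≠ []) :
    ∃ p q, IsDyckPath p ∧ IsDyckPath q ∧ r = glue p q := by
  obtain ⟨hd1, hd2', hd3⟩ := hd
  have hd2 : ∀ k, 0 ≤ ps r k := hd2'
  have hex : ∃ k, 1 ≤ k ∧ ps r k ≤ 0 :=
    ⟨r.length, List.length_pos_iff.2 hne, by rw [ps_of_le r (le_refl _), hd3]⟩
  classical
  obtain ⟨a, t, hat⟩ : ∃ a t, r = a :: t := by
    cases r with
    | nil => exact absurd rfl hne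
    | cons a t => exact ⟨a, t, rfl⟩
  have ha : a = 1 := by
    have h1 : ps r 1 = a := by rw [hat, show (1:ℕ) = 0 + 1 from rfl, ps_cons, ps_zero, add_zero]
    have h2 := hd2 1
    have h3 := hd1 a (by rw [hat]; simp)
    omega
  have hrt : ∀ k, ps r (k + 1) = 1 + ps t k := by
    intro k
    rw [hat, ps_cons, ha]
  set r₀ := Nat.find hex with hr₀def
  obtain ⟨hr₀1, hr₀2⟩ := Nat.find_spec hex
  have hmin : ∀ j, 1 ≤ j → j < r₀ → 1 ≤ ps r j := by
    intro j h1 h2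
    have h3 := Nat.find_min hex h2
    push_neg at h3
    have := h3 h1
    omega
  have hr₀len : r₀ ≤ r.length :=
    Nat.find_min' hex ⟨List.length_pos_iff.2 hne, by rw [ps_of_le r (le_refl _), hd3]⟩
  have hr₀0 : ps r r₀ = 0 := le_antisymm hr₀2 (hd2 r₀)
  have hr₀ge2 : 2 ≤ r₀ := by
    rcases Nat.lt_or_ge r₀ 2 with h | h
    · exfalso
      have h1 : r₀ = 1 := by omega
      rw [h1, hrt 0, ps_zero] at hr₀0
      omega
    · exact h
  set m := r₀ - 2 with hm
  have hmlt : m < t.length := by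
    have : r.length = t.length + 1 := by rw [hat]; simp
    omega
  set p := t.take m with hp
  set q := t.drop (m+1) with hq
  have hplen : p.length = m := by
    rw [hp, List.length_take]; omega
  -- partial sums of t
  have hptm : ps t m = 0 ∧ t.get ⟨m, hmlt⟩ = -1 := by
    have hstep : ps t (m+1) = ps t m + t.get ⟨m, hmlt⟩ := ps_succ t m hmlt
    have h1 : ps r ((m+1)+1) = 1 + ps t (m+1) := hrt (m+1)
    have h2 : ps r (m+1) = 1 + ps t m := hrt m
    have h3 : (m+1)+1 = r₀ := by omega
    rw [h3, hr₀0] at h1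
    have h4 : 1 ≤ ps r (m+1) := hmin (m+1) (by omega) (by omega)
    have h5 := hd1 (t.get ⟨m, hmlt⟩) (by rw [hat]; exact List.mem_cons_of_mem a (List.get_mem t ⟨m, hmlt⟩))
    omega
  have hstruct : r = glue p q := by
    rw [hat, ha, glue, List.cons_append]
    congr 1
    conv_lhs => rw [← List.take_append_drop m t]
    congr 1
    rw [List.drop_eq_getElem_cons hmlt]
    congr 1
    exact hptm.2
  have hpps : ∀ k, k ≤ m → ps p k = ps t k := by
    intro k hk
    show (p.take k).sum = (t.take k).sum
    rw [hp, List.take_take, min_eq_left hk]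
  have hpsum : p.sum = 0 := by
    rw [← ps_of_le p (le_refl _), hplen, hpps m (le_refl m), hptm.1]
  have hpdyck : IsDyckPath p := by
    refine ⟨fun s hs => hd1 s ?_, fun k => ?_, hpsum⟩
    · rw [hat]
      exact List.mem_cons_of_mem a (List.mem_of_mem_take hs)
    · show 0 ≤ ps p k
      rcases le_or_gt k m with hk | hk
      · rw [hpps k hk]
        have h1 := hmin (k+1) (by omega) (by omega)
        have h2 := hrt k
        omega
      · rw [ps_of_le p (by omega), hpsum]
  have hqdrop : q = r.drop r₀ := by
    rw [hq, hat, show r₀ = (m + 1) + 1 by omega, List.drop_succ_cons]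
  have hqps : ∀ k, ps q k = ps r (r₀ + k) := by
    intro k
    rw [hqdrop, ps_drop, hr₀0, sub_zero]
  have hqdyck : IsDyckPath q := by
    refine ⟨fun s hs => hd1 s ?_, fun k => ?_, ?_⟩
    · rw [hqdrop] at hs
      exact List.mem_of_mem_drop hs
    · show 0 ≤ ps q k
      rw [hqps k]
      exact hd2 _
    · have hqlen : q.length = r.length - r₀ := by
        rw [hqdrop, List.length_drop]
      rw [← ps_of_le q (le_refl _), hqps, hqlen,
        show r₀ + (r.length - r₀) = r.length by omega, ps_of_le r (le_refl _), hd3]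
  exact ⟨p, q, hpdyck, hqdyck, hstruct⟩


/-! ### counting recurrences -/

lemma nat_card_sigma {ι : Type*} [Fintype ι] {α : ι → Type*} [∀ i, Finite (α i)] :
    Nat.card (Σ i, α i) = ∑ i, Nat.card (α i) := by
  classical
  letI : ∀ i, Fintype (α i) := fun i => Fintype.ofFinite (α i)
  simp [Nat.card_eq_fintype_card, Fintype.card_sigma]

lemma cnt_zero_right (n : ℕ) : cnt n 0 = if n = 0 then 1 else 0 := by
  rcases Nat.eq_zero_or_pos n with rfl | hn
  · simp [cnt_zero_left]
  · rw [if_neg (by omega), cnt]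
    haveI : IsEmpty {p : List ℤ // IsDyckPath p ∧ p.length = 2*n ∧ pathHeight p ≤ 0} := by
      constructor
      rintro ⟨p, hd, hlen, hh⟩
      have := height_zero hd hh
      subst this
      simp at hlen
      omega
    exact Nat.card_of_isEmpty

lemma fc_zero (n : ℕ) : fc n 0 = if n = 0 then 1 else 0 := by
  rw [fc]
  have : ∀ p : List ℤ, (pathHeight p = 0) ↔ (pathHeight p ≤ 0) := by
    intro p; omega
  rcases Nat.eq_zero_or_pos n with rfl | hn
  · rw [if_pos rfl, Nat.card_eq_one_iff_unique]
    constructor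
    · constructor
      rintro ⟨l₁, hd₁, hl₁, _⟩ ⟨l₂, hd₂, hl₂, _⟩
      have e₁ : l₁ = [] := List.length_eq_zero_iff.1 (by omega)
      have e₂ : l₂ = [] := List.length_eq_zero_iff.1 (by omega)
      subst_vars; rfl
    · refine ⟨⟨[], ⟨by simp, by simp, by simp⟩, by simp, ?_⟩⟩
      have h1 : pathHeight [] ≤ 0 := by
        rw [pathHeight_le_iff]; intro k; simp [ps]
      omega
  · rw [if_neg (by omega)]
    haveI : IsEmpty {p : List ℤ // IsDyckPath p ∧ p.length = 2*n ∧ pathHeight p = 0} := by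
      constructor
      rintro ⟨p, hd, hlen, hh⟩
      have := height_zero hd (by omega)
      subst this
      simp at hlen
      omega
    exact Nat.card_of_isEmpty

lemma cnt_succ_height (n h : ℕ) : cnt n (h+1) = cnt n h + fc n (h+1) := by
  classical
  let Ψ : ({p : List ℤ // IsDyckPath p ∧ p.length = 2*n ∧ pathHeight p ≤ h} ⊕
      {p : List ℤ // IsDyckPath p ∧ p.length = 2*n ∧ pathHeight p = h+1}) →
      {p : List ℤ // IsDyckPath p ∧ p.length = 2*n ∧ pathHeight p ≤ h+1} := fun x =>
    match x with
    | .inl ⟨p, h1, h2, h3⟩ => ⟨p, h1, h2, by omega⟩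
    | .inr ⟨p, h1, h2, h3⟩ => ⟨p, h1, h2, by omega⟩
  have hbij : Function.Bijective Ψ := by
    constructor
    · rintro (⟨p₁, d₁, l₁, hh₁⟩ | ⟨p₁, d₁, l₁, hh₁⟩) (⟨p₂, d₂, l₂, hh₂⟩ | ⟨p₂, d₂, l₂, hh₂⟩) he <;>
        simp only [Ψ, Subtype.mk.injEq] at he <;> subst he
      · rfl
      · omega
      · omega
      · rfl
    · rintro ⟨p, hd, hlen, hh⟩
      rcases Nat.lt_or_ge (pathHeight p) (h+1) with h1 | h1
      · exact ⟨.inl ⟨p, hd, hlen, by omega⟩, rfl⟩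
      · exact ⟨.inr ⟨p, hd, hlen, by omega⟩, rfl⟩
  rw [cnt, ← Nat.card_congr (Equiv.ofBijective Ψ hbij), Nat.card_sum]
  rfl

lemma cnt_rec (n h : ℕ) :
    cnt (n+1) (h+1) = ∑ ij ∈ Finset.HasAntidiagonal.antidiagonal n, cnt ij.1 h * cnt ij.2 (h+1) := by
  classical
  let Φ : (Σ ij : {ij : ℕ × ℕ // ij ∈ Finset.HasAntidiagonal.antidiagonal n},
      ({p : List ℤ // IsDyckPath p ∧ p.length = 2*ij.val.1 ∧ pathHeight p ≤ h} ×
       {q : List ℤ // IsDyckPath q ∧ q.length = 2*ij.val.2 ∧ pathHeight q ≤ h+1})) →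
      {r : List ℤ // IsDyckPath r ∧ r.length = 2*(n+1) ∧ pathHeight r ≤ h+1} :=
    fun ⟨⟨ij, hij⟩, ⟨p, hp⟩, ⟨q, hq⟩⟩ => ⟨glue p q, glue_dyck hp.1 hq.1, by
      have e1 : p.length = 2 * ij.1 := hp.2.1
      have e2 : q.length = 2 * ij.2 := hq.2.1
      rw [glue_length, e1, e2]
      have := Finset.HasAntidiagonal.mem_antidiagonal.1 hij
      omega, glue_height_le hp.1.2.2 hp.2.2 hq.2.2⟩
  have hbij : Function.Bijective Φ := by
    constructor
    · rintro ⟨⟨⟨i₁, j₁⟩, hij₁⟩, ⟨p₁, hp₁⟩, ⟨q₁, hq₁⟩⟩ ⟨⟨⟨i₂, j₂⟩, hij₂⟩, ⟨p₂, hp₂⟩, ⟨q₂, hq₂⟩⟩ he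
      have hg : glue p₁ q₁ = glue p₂ q₂ := congrArg Subtype.val he
      obtain ⟨rfl, rfl⟩ := glue_inj hp₁.1 hp₂.1 hg
      obtain rfl : i₁ = i₂ := by
        have e1 : p₁.length = 2 * i₁ := hp₁.2.1
        have e2 : p₁.length = 2 * i₂ := hp₂.2.1
        omega
      obtain rfl : j₁ = j₂ := by
        have e1 : q₁.length = 2 * j₁ := hq₁.2.1
        have e2 : q₁.length = 2 * j₂ := hq₂.2.1
        omega
      rfl
    · rintro ⟨r, hdr, hlenr, hhr⟩
      have hne : r ≠ [] := by
        intro h0; rw [h0] at hlenr; simp at hlenr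
      obtain ⟨p, q, hp, hq, heq⟩ := dyck_decomp hdr hne
      obtain ⟨i, hi⟩ := dyck_length_even hp
      obtain ⟨j, hj⟩ := dyck_length_even hq
      have hlen2 : (glue p q).length = 2*(n+1) := by rw [← heq]; exact hlenr
      rw [glue_length] at hlen2
      have hijn : i + j = n := by omega
      rw [heq] at hhr
      refine ⟨⟨⟨(i, j), Finset.HasAntidiagonal.mem_antidiagonal.2 hijn⟩,
        ⟨p, hp, hi, glue_height_p hhr hp.2.1⟩,
        ⟨q, hq, hj, glue_height_q hp.2.2 hhr⟩⟩, ?_⟩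
      exact Subtype.ext heq.symm
  rw [cnt, ← Nat.card_congr (Equiv.ofBijective Φ hbij), nat_card_sigma]
  rw [← Finset.sum_coe_sort (Finset.HasAntidiagonal.antidiagonal n) (fun ij => cnt ij.1 h * cnt ij.2 (h+1))]
  congr 1
  ext ij
  rw [Nat.card_prod]
  rfl


/-! ### the tuple count P -/

instance finite_P (n : ℤ) (a : List ℕ) : Finite {p : Fin a.length → List ℤ //
    (∀ i, IsDyckPath (p i)) ∧
    (∑ i, ((p i).length : ℤ)) = 2 * n ∧
    ∀ i, pathHeight (p i) = a.get i} := by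
  apply Finite.of_injective (f := fun p => (fun i =>
    (⟨(p.val i), p.2.1 i |>.1, by
      have h1 : ((p.val i).length : ℤ) ≤ ∑ j, ((p.val j).length : ℤ) :=
        Finset.single_le_sum (f := fun j => ((p.val j).length : ℤ))
          (fun j _ => by positivity) (Finset.mem_univ i)
      rw [p.2.2.1] at h1
      omega⟩ : {l : List ℤ // (∀ s ∈ l, s = 1 ∨ s = -1) ∧ l.length ≤ (2*n).toNat})) )
  rintro ⟨p₁, h₁⟩ ⟨p₂, h₂⟩ he
  ext i : 2
  exact congrArg Subtype.val (congrFun he i)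

lemma P_nil (n : ℕ) : P (n : ℤ) [] = if n = 0 then 1 else 0 := by
  rcases Nat.eq_zero_or_pos n with rfl | hn
  · rw [if_pos rfl, P, Nat.card_eq_one_iff_unique]
    constructor
    · constructor
      rintro ⟨p₁, _⟩ ⟨p₂, _⟩
      ext i
      exact i.elim0
    · refine ⟨⟨fun i => i.elim0, fun i => i.elim0, by simp, fun i => i.elim0⟩⟩
  · rw [if_neg (by omega), P]
    haveI : IsEmpty {p : Fin ([] : List ℕ).length → List ℤ //
        (∀ i, IsDyckPath (p i)) ∧ (∑ i, ((p i).length : ℤ)) = 2 * (n:ℤ) ∧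
        ∀ i, pathHeight (p i) = ([] : List ℕ).get i} := by
      constructor
      rintro ⟨p, _, hsum, _⟩
      have : (∑ i : Fin ([] : List ℕ).length, ((p i).length : ℤ)) = 0 := by simp
      omega
    exact Nat.card_of_isEmpty

lemma P_cons (n : ℕ) (a : ℕ) (as : List ℕ) :
    P (n : ℤ) (a :: as) = ∑ ij ∈ Finset.HasAntidiagonal.antidiagonal n, fc ij.1 a * P (ij.2 : ℤ) as := by
  classical
  let Φ : (Σ ij : {ij : ℕ × ℕ // ij ∈ Finset.HasAntidiagonal.antidiagonal n},
      ({p : List ℤ // IsDyckPath p ∧ p.length = 2*ij.val.1 ∧ pathHeight p = a} ×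
       {p : Fin as.length → List ℤ // (∀ i, IsDyckPath (p i)) ∧
         (∑ i, ((p i).length : ℤ)) = 2 * (ij.val.2 : ℤ) ∧ ∀ i, pathHeight (p i) = as.get i})) →
      {p : Fin (a :: as).length → List ℤ // (∀ i, IsDyckPath (p i)) ∧
        (∑ i, ((p i).length : ℤ)) = 2 * (n : ℤ) ∧ ∀ i, pathHeight (p i) = (a :: as).get i} :=
    fun ⟨⟨ij, hij⟩, ⟨p0, hp0⟩, ⟨pr, hpr⟩⟩ => ⟨Fin.cons p0 pr, by
      intro i
      refine Fin.cases ?_ ?_ i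
      · rw [Fin.cons_zero]; exact hp0.1
      · intro k; rw [Fin.cons_succ]; exact hpr.1 k, by
      have e0 : p0.length = 2 * ij.1 := hp0.2.1
      have e1 : (∑ i, ((pr i).length : ℤ)) = 2 * (ij.2 : ℤ) := hpr.2.1
      have e2 := Finset.HasAntidiagonal.mem_antidiagonal.1 hij
      simp only [List.length_cons]
      rw [Fin.sum_univ_succ]
      simp only [Fin.cons_zero, Fin.cons_succ]
      rw [e0, e1]
      push_cast
      omega, by
      intro i
      refine Fin.cases ?_ ?_ i
      · rw [Fin.cons_zero]; exact hp0.2.2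
      · intro k; rw [Fin.cons_succ]; exact hpr.2.2 k⟩
  have hbij : Function.Bijective Φ := by
    constructor
    · rintro ⟨⟨⟨i₁, j₁⟩, hij₁⟩, ⟨p₁, hp₁⟩, ⟨q₁, hq₁⟩⟩ ⟨⟨⟨i₂, j₂⟩, hij₂⟩, ⟨p₂, hp₂⟩, ⟨q₂, hq₂⟩⟩ he
      have hg : (Fin.cons p₁ q₁ : ∀ _ : Fin (as.length + 1), List ℤ) = Fin.cons p₂ q₂ :=
        congrArg Subtype.val he
      obtain rfl : p₁ = p₂ := by
        have := congrFun hg (0 : Fin (as.length + 1))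
        rwa [Fin.cons_zero, Fin.cons_zero] at this
      obtain rfl : q₁ = q₂ := by
        funext k
        have := congrFun hg k.succ
        rwa [Fin.cons_succ, Fin.cons_succ] at this
      obtain rfl : i₁ = i₂ := by
        have e1 : p₁.length = 2 * i₁ := hp₁.2.1
        have e2 : p₁.length = 2 * i₂ := hp₂.2.1
        omega
      obtain rfl : j₁ = j₂ := by
        have e1 := Finset.HasAntidiagonal.mem_antidiagonal.1 hij₁
        have e2 := Finset.HasAntidiagonal.mem_antidiagonal.1 hij₂
        omega
      rfl
    · rintro ⟨p', hd', hsum', hh'⟩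
      let p : Fin (as.length + 1) → List ℤ := p'
      have hd : ∀ i : Fin (as.length + 1), IsDyckPath (p i) := hd'
      have hsum : (∑ i : Fin (as.length + 1), ((p i).length : ℤ)) = 2 * (n : ℤ) := hsum'
      have hh : ∀ i : Fin (as.length + 1), pathHeight (p i) = (a :: as).get i := hh'
      obtain ⟨i, hi⟩ := dyck_length_even (hd 0)
      have hrest : (∑ k : Fin as.length, ((p k.succ).length : ℤ)) = 2 * (n : ℤ) - 2 * i := by
        rw [Fin.sum_univ_succ] at hsum
        rw [← hsum, hi]
        push_cast
        ring
      have hile : i ≤ n := by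
        have hpos : (0:ℤ) ≤ ∑ k : Fin as.length, ((p k.succ).length : ℤ) :=
          Finset.sum_nonneg (fun k _ => by positivity)
        rw [hrest] at hpos
        omega
      refine ⟨⟨⟨(i, n - i), Finset.HasAntidiagonal.mem_antidiagonal.2 (by omega)⟩,
        ⟨p 0, hd 0, hi, hh 0⟩,
        ⟨fun k => p k.succ, fun k => hd k.succ, by
          rw [hrest]
          have : ((n - i : ℕ) : ℤ) = (n : ℤ) - i := by omega
          rw [this]; ring, fun k => hh k.succ⟩⟩, ?_⟩
      exact Subtype.ext (Fin.cons_self_tail p)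
  rw [P, ← Nat.card_congr (Equiv.ofBijective Φ hbij), nat_card_sigma]
  rw [← Finset.sum_coe_sort (Finset.HasAntidiagonal.antidiagonal n) (fun ij => fc ij.1 a * P (ij.2 : ℤ) as)]
  congr 1
  ext ij
  rw [Nat.card_prod]
  rfl


/-! ### power series -/

open PowerSeries in
noncomputable def Cser (h : ℕ) : PowerSeries ℤ := PowerSeries.mk fun n => (cnt n h : ℤ)

noncomputable def Cpred : ℕ → PowerSeries ℤ
  | 0 => 0
  | h+1 => Cser h

noncomputable def Fser (h : ℕ) : PowerSeries ℤ := Cser h - Cpred h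

lemma Cser_rel (h : ℕ) : Cser h = 1 + PowerSeries.X * (Cpred h * Cser h) := by
  ext n
  cases n with
  | zero =>
    simp [Cser, PowerSeries.coeff_zero_eq_constantCoeff, cnt_zero_left]
  | succ n =>
    rw [map_add, PowerSeries.coeff_succ_X_mul, PowerSeries.coeff_one, if_neg (by omega)]
    cases h with
    | zero =>
      simp only [Cpred, zero_mul, map_zero, zero_add, Cser, PowerSeries.coeff_mk]
      rw [cnt_zero_right, if_neg (by omega)]
      norm_num
    | succ h =>
      simp only [Cpred, zero_add, Cser, PowerSeries.coeff_mk, PowerSeries.coeff_mul]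
      rw [cnt_rec n h]
      push_cast
      rfl

lemma Fser_coeff (n h : ℕ) : (PowerSeries.coeff n) (Fser h) = (fc n h : ℤ) := by
  cases h with
  | zero =>
    simp only [Fser, Cpred, sub_zero, Cser, PowerSeries.coeff_mk]
    rw [cnt_zero_right, fc_zero]
  | succ h =>
    simp only [Fser, Cpred, map_sub, Cser, PowerSeries.coeff_mk]
    have := cnt_succ_height n h
    push_cast [this]
    ring

lemma main_ps (z : ℕ) : Fser (z+1) = PowerSeries.X * (Fser (z+1) + Fser (z+1)
    + Fser z + Fser (z+1+1)
    - Fser (z+1) * (Fser z + Fser (z+1) + Fser (z+1+1))) := by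
  have e1 : Cpred (z+1) = Cser z := rfl
  have e2 : Cpred (z+1+1) = Cser (z+1) := rfl
  have h1 := Cser_rel z
  have h2 := Cser_rel (z+1)
  have h3 := Cser_rel (z+1+1)
  rw [e1] at h2
  rw [e2] at h3
  simp only [Fser, e1, e2]
  linear_combination (PowerSeries.X * Cser (z+1) - 1) * h1
    + (1 + PowerSeries.X * Cser (z+1+1) - PowerSeries.X * Cpred z) * h2
    - PowerSeries.X * Cser z * h3

noncomputable def PSer (a : List ℕ) : PowerSeries ℤ := PowerSeries.mk fun n => (P (n : ℤ) a : ℤ)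

lemma PSer_nil : PSer [] = 1 := by
  ext n
  rw [PSer, PowerSeries.coeff_mk, P_nil, PowerSeries.coeff_one]
  split <;> simp_all

lemma PSer_cons (a : ℕ) (as : List ℕ) : PSer (a :: as) = Fser a * PSer as := by
  ext n
  rw [PSer, PowerSeries.coeff_mk, PowerSeries.coeff_mul, P_cons]
  push_cast
  refine Finset.sum_congr rfl (fun ij _ => ?_)
  rw [Fser_coeff, PSer, PowerSeries.coeff_mk]

lemma PSer_insert (u v : List ℕ) (h : ℕ) :
    PSer (u ++ h :: v) = Fser h * PSer (u ++ v) := by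
  induction u with
  | nil => exact PSer_cons h v
  | cons g u ih =>
    rw [List.cons_append, PSer_cons, ih, List.cons_append, PSer_cons]
    ring

lemma PSer_replicate (m h : ℕ) (u v : List ℕ) :
    PSer (u ++ (List.replicate m h ++ v)) = Fser h ^ m * PSer (u ++ v) := by
  induction m with
  | zero => simp
  | succ m ih =>
    rw [List.replicate_succ, List.cons_append, PSer_insert u (List.replicate m h ++ v) h,
      ih, pow_succ]
    ring


/-! ### Qx bridge -/

def EL : ℕ → List ℕ → List ℕ
  | _, [] => []
  | x, m :: l => List.replicate m x ++ EL (x+1) l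

lemma enumFrom_flatMap (x : ℕ) (l : List ℕ) : ∀ i : ℕ,
    (l.zipIdx i).flatMap (fun q => List.replicate q.1 (x + q.2)) = EL (x + i) l := by
  induction l with
  | nil => intro i; rfl
  | cons m l ih =>
    intro i
    rw [List.zipIdx_cons, List.flatMap_cons, ih (i+1), EL]
    have : x + (i + 1) = (x + i) + 1 := by omega
    rw [this]

lemma Qx_eq (n : ℤ) (x : ℕ) (l : List ℕ) : Qx n x l = P n (EL x l) := by
  have h := enumFrom_flatMap x l 0
  rw [Qx, h, add_zero]

lemma EL_append (u v : List ℕ) : ∀ x : ℕ, EL x (u ++ v) = EL x u ++ EL (x + u.length) v := by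
  induction u with
  | nil => intro x; simp [EL]
  | cons m u ih =>
    intro x
    rw [List.cons_append, EL, EL, ih (x+1), List.append_assoc]
    have : x + 1 + u.length = x + (m :: u).length := by simp; omega
    rw [this]

lemma EL_mid (x : ℕ) (l₁ l₂ : List ℕ) (β γ δ : ℕ) :
    EL x (l₁ ++ β :: γ :: δ :: l₂) = EL x l₁ ++
      (List.replicate β (x + l₁.length) ++
        (List.replicate γ (x + l₁.length + 1) ++
          (List.replicate δ (x + l₁.length + 1 + 1) ++ EL (x + l₁.length + 1 + 1 + 1) l₂))) := by
  rw [EL_append, EL, EL, EL]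

lemma PSer_mid (x : ℕ) (l₁ l₂ : List ℕ) (β γ δ : ℕ) :
    PSer (EL x (l₁ ++ β :: γ :: δ :: l₂)) =
      Fser (x + l₁.length) ^ β * (Fser (x + l₁.length + 1) ^ γ *
        (Fser (x + l₁.length + 1 + 1) ^ δ *
          PSer (EL x l₁ ++ EL (x + l₁.length + 1 + 1 + 1) l₂))) := by
  rw [EL_mid, PSer_replicate, PSer_replicate, PSer_replicate]


end DyckProofAux

open DyckProofAux

/-- For `n ≥ 1`, `x ≥ 0` and a tuple `(a₀,…,a_k)` written as `l₁ ++ [b, c, d] ++ l₂`,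
where `b = a_{i-1}`, `c = aᵢ ≥ 1`, `d = a_{i+1}` for an index `i` with `1 ≤ i ≤ k`
(the case `i = k` corresponds to `d = 0` and `l₂ = []`, i.e. extending the tuple by
`a_{k+1} = 0`, which does not change the value of `Qx`):
`Q_n^{(x)}(a₀,…) = 2·Q_{n-1}^{(x)}(a₀,…) + Q_{n-1}^{(x)}(…, a_{i-1}+1, aᵢ−1, …)
  + Q_{n-1}^{(x)}(…, aᵢ−1, a_{i+1}+1, …) − Q_{n-1}^{(x)}(…, a_{i-1}+1, aᵢ, …)
  − Q_{n-1}^{(x)}(…, aᵢ+1, …) − Q_{n-1}^{(x)}(…, aᵢ, a_{i+1}+1, …)`. -/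
theorem grouped_shorten_fixed_base (n : ℕ) (hn : 1 ≤ n) (x : ℕ)
    (l₁ l₂ : List ℕ) (b c d : ℕ) (hc : 1 ≤ c) :
    (Qx (n : ℤ) x (l₁ ++ b :: c :: d :: l₂) : ℤ) =
      2 * Qx ((n : ℤ) - 1) x (l₁ ++ b :: c :: d :: l₂)
        + Qx ((n : ℤ) - 1) x (l₁ ++ (b + 1) :: (c - 1) :: d :: l₂)
        + Qx ((n : ℤ) - 1) x (l₁ ++ b :: (c - 1) :: (d + 1) :: l₂)
        - Qx ((n : ℤ) - 1) x (l₁ ++ (b + 1) :: c :: d :: l₂)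
        - Qx ((n : ℤ) - 1) x (l₁ ++ b :: (c + 1) :: d :: l₂)
        - Qx ((n : ℤ) - 1) x (l₁ ++ b :: c :: (d + 1) :: l₂) := by
  obtain ⟨c', rfl⟩ : ∃ c', c = c' + 1 := ⟨c - 1, by omega⟩
  -- the power-series identity
  have key : PSer (EL x (l₁ ++ b :: (c'+1) :: d :: l₂)) = PowerSeries.X *
      (PSer (EL x (l₁ ++ b :: (c'+1) :: d :: l₂))
        + PSer (EL x (l₁ ++ b :: (c'+1) :: d :: l₂))
        + PSer (EL x (l₁ ++ (b+1) :: c' :: d :: l₂))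
        + PSer (EL x (l₁ ++ b :: c' :: (d+1) :: l₂))
        - PSer (EL x (l₁ ++ (b+1) :: (c'+1) :: d :: l₂))
        - PSer (EL x (l₁ ++ b :: (c'+1+1) :: d :: l₂))
        - PSer (EL x (l₁ ++ b :: (c'+1) :: (d+1) :: l₂))) := by
    rw [PSer_mid, PSer_mid, PSer_mid, PSer_mid, PSer_mid, PSer_mid]
    have hm := main_ps (x + l₁.length)
    linear_combination (Fser (x + l₁.length) ^ b * Fser (x + l₁.length + 1) ^ c' *
      (Fser (x + l₁.length + 1 + 1) ^ d *
        PSer (EL x l₁ ++ EL (x + l₁.length + 1 + 1 + 1) l₂))) * hm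
  -- extract coefficient n
  have hco := congrArg (PowerSeries.coeff n) key
  rw [show n = (n-1)+1 by omega, PowerSeries.coeff_succ_X_mul] at hco
  simp only [map_add, map_sub, PSer, PowerSeries.coeff_mk] at hco
  -- translate Qx to P
  have hcast : ((n : ℤ) - 1) = ((n - 1 : ℕ) : ℤ) := by omega
  have hN : ((((n-1)+1 : ℕ)) : ℤ) = (n : ℤ) := by omega
  rw [hcast]
  rw [Qx_eq, Qx_eq, Qx_eq, Qx_eq, Qx_eq, Qx_eq, Qx_eq]
  rw [show (c' + 1 - 1) = c' by omega, show (c' + 1 + 1) = c' + 1 + 1 from rfl] at *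
  rw [hN] at hco
  push_cast
  linarith [hco]
end
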